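/- arXiv:0808.1657 — 2 statements merged into one kernel-verified Lean document; each statement's English description precedes it below -/
import Mathlib

section
/- Let A be a Sturmian binary sequence and let B be the characteristic Sturmian sequence with the same slope as A. Then the lexicographically least sequence in the orbit closure of A is 0B (the letter 0 followed by B), and the lexicographically greatest sequence in the orbit closure of A is 1B (the letter 1 followed by B). -/
/-- Lexicographic order on infinite sequences over a linearly ordered
alphabet: `x ≤ y` iff `x = y` or `x` and `y` agree before some position `n`
and `x n < y n`. -/
def SeqLexLe {Δ : Type*} [LinearOrder Δ] (x y : ℕ → Δ) : Prop :=
  x = y ∨ ∃ n : ℕ, (∀ m : ℕ, m < n → x m = y m) ∧ x n < y n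

/-- `b` lies in the orbit closure of `a`: every finite prefix of `b` is a
factor of `a`. -/
def InOrbitClosure {Δ : Type*} (a b : ℕ → Δ) : Prop :=
  ∀ n : ℕ, ∃ i : ℕ, ∀ m : ℕ, m < n → b m = a (i + m)

/-- `a` is a `k`-automatic sequence: there is a DFAO (finite state set `Fin n`,
transition `δ`, initial state `q0`, output `τ`) which, on every base-`k`
representation of `m` read least significant digit first (i.e. on `w^R`,
possibly with leading zeros in `w`), outputs `a m`. -/
def IsKAutomatic (k : ℕ) {Δ : Type*} (a : ℕ → Δ) : Prop :=
  ∃ (n : ℕ) (δ : Fin n → Fin k → Fin n) (q0 : Fin n) (τ : Fin n → Δ),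
    ∀ (m : ℕ) (w : List (Fin k)),
      Nat.ofDigits k (w.map Fin.val) = m → a m = τ (w.foldl δ q0)

/-- The set of factors of length `n` of the infinite word `A`. -/
def factorsOfLength (A : ℕ → ℤ) (n : ℕ) : Set (List ℤ) :=
  {w | ∃ i : ℕ, w = (List.range n).map fun m => A (i + m)}

/-- `A` is a Sturmian sequence: a binary sequence with exactly `n + 1`
distinct factors of each length `n`. -/
def IsSturmian (A : ℕ → ℤ) : Prop :=
  (∀ n : ℕ, A n = 0 ∨ A n = 1) ∧ ∀ n : ℕ, (factorsOfLength A n).ncard = n + 1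

/-- `A` has slope `α`: the frequency of the letter `1` in `A` is `α`. -/
def HasSlope (A : ℕ → ℤ) (α : ℝ) : Prop :=
  Filter.Tendsto (fun n => (∑ i ∈ Finset.range n, (A i : ℝ)) / n)
    Filter.atTop (nhds α)

/-- The characteristic Sturmian sequence of slope `α`:
`bₙ = ⌊(n+2)α⌋ - ⌊(n+1)α⌋`. -/
noncomputable def charSturmian (α : ℝ) (n : ℕ) : ℤ :=
  ⌊((n : ℝ) + 2) * α⌋ - ⌊((n : ℝ) + 1) * α⌋

/-- The sequence obtained by prepending the letter `c` to the sequence `B`. -/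
def consSeq (c : ℤ) (B : ℕ → ℤ) : ℕ → ℤ
  | 0 => c
  | n + 1 => B n

namespace SOC

/-- window of length `n` at position `i` -/
def Wd (b : ℕ → ℤ) (n i : ℕ) : List ℤ := (List.range n).map fun t => b (i + t)

def Weq (b : ℕ → ℤ) (n i j : ℕ) : Prop := ∀ t, t < n → b (i + t) = b (j + t)

def EvPer (b : ℕ → ℤ) : Prop := ∃ N P, 0 < P ∧ ∀ x, N ≤ x → b (x + P) = b x

def Branch (b : ℕ → ℤ) (k i j : ℕ) : Prop := Weq b k i j ∧ b (i + k) ≠ b (j + k)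

lemma Wd_mem (b : ℕ → ℤ) (n i : ℕ) : Wd b n i ∈ factorsOfLength b n := ⟨i, rfl⟩

lemma mem_factors_iff {b : ℕ → ℤ} {n : ℕ} {u : List ℤ} :
    u ∈ factorsOfLength b n ↔ ∃ i, u = Wd b n i := Iff.rfl

lemma Wd_length (b : ℕ → ℤ) (n i : ℕ) : (Wd b n i).length = n := by
  simp [Wd]

lemma Wd_succ (b : ℕ → ℤ) (n i : ℕ) : Wd b (n+1) i = Wd b n i ++ [b (i+n)] := by
  unfold Wd; rw [List.range_succ]; simp

lemma Wd_zero (b : ℕ → ℤ) (i : ℕ) : Wd b 0 i = [] := rfl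

lemma factors_zero (b : ℕ → ℤ) : factorsOfLength b 0 = {([] : List ℤ)} := by
  ext u; constructor
  · rintro ⟨i, rfl⟩; rfl
  · rintro rfl; exact ⟨0, rfl⟩

lemma Weq_iff {b : ℕ → ℤ} {n i j : ℕ} : Weq b n i j ↔ Wd b n i = Wd b n j := by
  constructor
  · intro h
    apply List.map_eq_map_iff.mpr
    intro t ht; exact h t (List.mem_range.mp ht)
  · intro h t ht
    have := List.map_eq_map_iff.mp h t (List.mem_range.mpr ht)
    exact this

lemma Wd_eq_of {b c : ℕ → ℤ} {n i j : ℕ} (h : ∀ t, t < n → b (i + t) = c (j + t)) :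
    Wd b n i = Wd c n j := by
  apply List.map_eq_map_iff.mpr
  intro t ht; exact h t (List.mem_range.mp ht)

lemma Wd_eq_elim {b c : ℕ → ℤ} {n i j : ℕ} (h : Wd b n i = Wd c n j) :
    ∀ t, t < n → b (i + t) = c (j + t) := by
  intro t ht
  exact List.map_eq_map_iff.mp h t (List.mem_range.mpr ht)

lemma Weq.refl (b : ℕ → ℤ) (n i : ℕ) : Weq b n i i := fun _ _ => rfl

lemma Weq.symm {b : ℕ → ℤ} {n i j : ℕ} (h : Weq b n i j) : Weq b n j i :=
  fun t ht => (h t ht).symm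

lemma Weq.trans {b : ℕ → ℤ} {n i j k : ℕ} (h : Weq b n i j) (h' : Weq b n j k) :
    Weq b n i k := fun t ht => (h t ht).trans (h' t ht)

lemma Weq.mono {b : ℕ → ℤ} {n n' i j : ℕ} (h : Weq b n i j) (hn : n' ≤ n) :
    Weq b n' i j := fun t ht => h t (lt_of_lt_of_le ht hn)

lemma Weq.shift {b : ℕ → ℤ} {n i j : ℕ} (h : Weq b (n+1) i j) : Weq b n (i+1) (j+1) := by
  intro t ht
  have := h (t+1) (by omega)
  simpa [Nat.add_assoc, Nat.add_comm 1 t] using this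

lemma Weq.snoc {b : ℕ → ℤ} {n i j : ℕ} (h : Weq b n i j) (h' : b (i+n) = b (j+n)) :
    Weq b (n+1) i j := by
  intro t ht
  rcases Nat.lt_or_ge t n with h''|h''
  · exact h t h''
  · have : t = n := by omega
    subst this; exact h'

/-- finiteness of the factor sets of a binary sequence -/
lemma factors_finite {b : ℕ → ℤ} (hbin : ∀ n, b n = 0 ∨ b n = 1) (n : ℕ) :
    (factorsOfLength b n).Finite := by
  induction n with
  | zero => rw [factors_zero]; exact Set.finite_singleton _
  | succ n ih =>
    have : factorsOfLength b (n+1) ⊆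
        (fun p : List ℤ × ℤ => p.1 ++ [p.2]) '' ((factorsOfLength b n) ×ˢ ({0, 1} : Set ℤ)) := by
      rintro u ⟨i, rfl⟩
      refine ⟨⟨Wd b n i, b (i+n)⟩, ⟨Wd_mem b n i, hbin (i+n)⟩, (Wd_succ b n i).symm⟩
    exact Set.Finite.subset ((ih.prod ((Set.finite_singleton (1:ℤ)).insert 0)).image _) this



open Classical in
/-- choice of an occurrence of a factor -/
noncomputable def occ (b : ℕ → ℤ) (n : ℕ) (u : List ℤ) : ℕ :=
  if h : u ∈ factorsOfLength b n then h.choose else 0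

lemma occ_spec {b : ℕ → ℤ} {n : ℕ} {u : List ℤ} (h : u ∈ factorsOfLength b n) :
    u = Wd b n (occ b n u) := by
  rw [occ, dif_pos h]; exact h.choose_spec

/-- the canonical one-letter extension map -/
noncomputable def ext (b : ℕ → ℤ) (n : ℕ) (u : List ℤ) : List ℤ :=
  u ++ [b (occ b n u + n)]

lemma ext_mem {b : ℕ → ℤ} {n : ℕ} {u : List ℤ} (h : u ∈ factorsOfLength b n) :
    ext b n u ∈ factorsOfLength b (n+1) := by
  refine ⟨occ b n u, ?_⟩
  show ext b n u = Wd b (n+1) (occ b n u)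
  rw [Wd_succ, ← occ_spec h, ext]

lemma append_single_inj {u v : List ℤ} {x y : ℤ} (hlen : u.length = v.length)
    (h : u ++ [x] = v ++ [y]) : u = v ∧ x = y := by
  have := List.append_inj h hlen
  refine ⟨this.1, ?_⟩
  have h2 := this.2
  simpa using h2

lemma ext_injOn (b : ℕ → ℤ) (n : ℕ) :
    Set.InjOn (ext b n) (factorsOfLength b n) := by
  intro u hu v hv h
  have hlu : u.length = n := by rw [occ_spec hu]; exact Wd_length _ _ _
  have hlv : v.length = n := by rw [occ_spec hv]; exact Wd_length _ _ _
  exact (append_single_inj (hlu.trans hlv.symm) h).1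

/-- a branching window yields an extension missed by the canonical extension map -/
lemma branch_miss {b : ℕ → ℤ} {k i j : ℕ} (hB : Branch b k i j) :
    ∃ x : ℤ, (Wd b k i) ++ [x] ∈ factorsOfLength b (k+1) ∧
      (Wd b k i) ++ [x] ∉ ext b k '' (factorsOfLength b k) := by
  classical
  set E := factorsOfLength b k with hE
  set u : List ℤ := Wd b k i with hu
  have hWj : Wd b k j = u := (Weq_iff.mp hB.1).symm
  have he1 : u ++ [b (i+k)] ∈ factorsOfLength b (k+1) := by
    refine ⟨i, ?_⟩
    show u ++ [b (i+k)] = Wd b (k+1) i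
    rw [Wd_succ, hu]
  have he2 : u ++ [b (j+k)] ∈ factorsOfLength b (k+1) := by
    refine ⟨j, ?_⟩
    show u ++ [b (j+k)] = Wd b (k+1) j
    rw [Wd_succ, hWj]
  have hulen : u.length = k := Wd_length _ _ _
  have key : ∀ x : ℤ, u ++ [x] ∈ ext b k '' E → b (occ b k u + k) = x := by
    rintro x ⟨v, hv, hvx⟩
    have hlv : v.length = k := by rw [occ_spec hv]; exact Wd_length _ _ _
    have hvx' : v ++ [b (occ b k v + k)] = u ++ [x] := hvx
    have h2 := append_single_inj (hlv.trans hulen.symm) hvx'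
    rcases h2 with ⟨rfl, h3⟩
    exact h3
  by_cases hmem : u ++ [b (i+k)] ∈ ext b k '' E
  · refine ⟨b (j+k), he2, fun hmem2 => ?_⟩
    exact hB.2 ((key _ hmem).symm.trans (key _ hmem2))
  · exact ⟨b (i+k), he1, hmem⟩

lemma card_succ_of_branch {b : ℕ → ℤ} (hbin : ∀ n, b n = 0 ∨ b n = 1) {k i j : ℕ}
    (hB : Branch b k i j) :
    (factorsOfLength b k).ncard + 1 ≤ (factorsOfLength b (k+1)).ncard := by
  classical
  obtain ⟨x, hmem, hnot⟩ := branch_miss hB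
  have hEfin := factors_finite hbin k
  have hE1fin := factors_finite hbin (k+1)
  have himsub : ext b k '' (factorsOfLength b k) ⊆ factorsOfLength b (k+1) := by
    rintro _ ⟨v, hv, rfl⟩; exact ext_mem hv
  have himcard : (ext b k '' (factorsOfLength b k)).ncard = (factorsOfLength b k).ncard :=
    Set.ncard_image_of_injOn (ext_injOn b k)
  have hsub : insert (Wd b k i ++ [x]) (ext b k '' (factorsOfLength b k)) ⊆
      factorsOfLength b (k+1) := by
    intro y hy; rcases Set.mem_insert_iff.mp hy with rfl|hy
    · exact hmem
    · exact himsub hy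
  calc (factorsOfLength b k).ncard + 1
      = (insert (Wd b k i ++ [x]) (ext b k '' (factorsOfLength b k))).ncard := by
        rw [Set.ncard_insert_of_notMem hnot (hEfin.image _), himcard]
    _ ≤ _ := Set.ncard_le_ncard hsub hE1fin

lemma card_succ_of_two_branches {b : ℕ → ℤ} (hbin : ∀ n, b n = 0 ∨ b n = 1) {k i j i' j' : ℕ}
    (hB : Branch b k i j) (hB' : Branch b k i' j') (hne : Wd b k i ≠ Wd b k i') :
    (factorsOfLength b k).ncard + 2 ≤ (factorsOfLength b (k+1)).ncard := by
  classical
  obtain ⟨x, hmem, hnot⟩ := branch_miss hB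
  obtain ⟨x', hmem', hnot'⟩ := branch_miss hB'
  have hEfin := factors_finite hbin k
  have hE1fin := factors_finite hbin (k+1)
  have himsub : ext b k '' (factorsOfLength b k) ⊆ factorsOfLength b (k+1) := by
    rintro _ ⟨v, hv, rfl⟩; exact ext_mem hv
  have himcard : (ext b k '' (factorsOfLength b k)).ncard = (factorsOfLength b k).ncard :=
    Set.ncard_image_of_injOn (ext_injOn b k)
  have hxx : Wd b k i ++ [x] ≠ Wd b k i' ++ [x'] := by
    intro h
    exact hne (append_single_inj ((Wd_length b k i).trans (Wd_length b k i').symm) h).1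
  have hsub : insert (Wd b k i ++ [x]) (insert (Wd b k i' ++ [x'])
      (ext b k '' (factorsOfLength b k))) ⊆ factorsOfLength b (k+1) := by
    intro y hy; rcases Set.mem_insert_iff.mp hy with rfl|hy
    · exact hmem
    rcases Set.mem_insert_iff.mp hy with rfl|hy
    · exact hmem'
    · exact himsub hy
  calc (factorsOfLength b k).ncard + 2
      = (insert (Wd b k i ++ [x]) (insert (Wd b k i' ++ [x'])
          (ext b k '' (factorsOfLength b k)))).ncard := by
        rw [Set.ncard_insert_of_notMem (by
            intro h; rcases Set.mem_insert_iff.mp h with h|h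
            · exact hxx h
            · exact hnot h) (((hEfin.image _)).insert _),
          Set.ncard_insert_of_notMem hnot' (hEfin.image _), himcard]
    _ ≤ _ := Set.ncard_le_ncard hsub hE1fin

/-- Morse–Hedlund: complexity `≤ L` at some level forces eventual periodicity. -/
lemma morse_hedlund {b : ℕ → ℤ} (hbin : ∀ n, b n = 0 ∨ b n = 1) {L : ℕ}
    (hL : (factorsOfLength b L).ncard ≤ L) : EvPer b := by
  classical
  -- find a level with no branching window
  have h0 : (factorsOfLength b 0).ncard = 1 := by
    rw [factors_zero]; simp
  have hex : ∃ k, k < L ∧ ∀ i j, ¬ Branch b k i j := by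
    by_contra h
    push_neg at h
    have : ∀ k, k ≤ L → k + 1 ≤ (factorsOfLength b k).ncard := by
      intro k
      induction k with
      | zero => intro _; omega
      | succ k ih =>
        intro hk
        obtain ⟨i, j, hB⟩ := h k (by omega)
        have := card_succ_of_branch hbin hB
        have := ih (by omega)
        omega
    have := this L le_rfl
    omega
  obtain ⟨k, _, hnb⟩ := hex
  -- determinism
  have hdet : ∀ i j, Weq b k i j → b (i + k) = b (j + k) := by
    intro i j hw
    by_contra hne
    exact hnb i j ⟨hw, hne⟩
  -- pigeonhole on windows
  have hfin : (factorsOfLength b k).Finite := factors_finite hbin k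
  have : ∃ i j : ℕ, i ≠ j ∧ Wd b k i = Wd b k j := by
    have : ¬ Function.Injective (fun i => (⟨Wd b k i, Wd_mem b k i⟩ :
        (factorsOfLength b k))) := by
      intro hinj
      have : Infinite (factorsOfLength b k) := Infinite.of_injective _ hinj
      exact (Set.Infinite.mono (subset_refl _) (Set.infinite_coe_iff.mp this)) hfin
    rw [Function.not_injective_iff] at this
    obtain ⟨i, j, hij, hne⟩ := this
    exact ⟨i, j, hne, by simpa using hij⟩
  obtain ⟨i, j, hne, hw⟩ := this
  -- wlog i < j
  rcases Nat.lt_or_ge i j with hlt|hge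
  case _ =>
    refine ⟨i, j - i, by omega, ?_⟩
    have prop : ∀ t, Weq b k (i + t) (j + t) := by
      intro t
      induction t with
      | zero => simpa using Weq_iff.mpr hw
      | succ t ih =>
        have hlast := hdet _ _ ih
        intro s hs
        rcases Nat.lt_or_ge (s+1) k with h'|h'
        · have := ih (s+1) h'
          simpa [Nat.add_assoc, Nat.add_comm 1 s] using this
        · have hsk : s = k - 1 := by omega
          have hk1 : k = s + 1 := by
            have : 0 < k := by omega
            omega
          have : b (i + t + k) = b (j + t + k) := hlast
          rw [hk1] at this
          simpa [Nat.add_assoc, Nat.add_comm 1 s] using this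
    intro x hx
    have hxk : k ≤ x + k := by omega
    rcases Nat.lt_or_ge k 1 with hk0|hk1
    · -- k = 0 : determinism is unconditional
      interval_cases k
      have := hdet (x + (j - i)) x (by intro t ht; omega)
      simpa using this
    · have := prop (x - i) 0 (by omega)
      have hxi : i + (x - i) = x := by omega
      have hxj : j + (x - i) = x + (j - i) := by omega
      rw [hxi, hxj] at this
      simpa using this.symm
  case _ =>
    have hlt : j < i := by omega
    refine ⟨j, i - j, by omega, ?_⟩
    have prop : ∀ t, Weq b k (j + t) (i + t) := by
      intro t
      induction t with
      | zero => simpa using (Weq_iff.mpr hw).symm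
      | succ t ih =>
        have hlast := hdet _ _ ih
        intro s hs
        rcases Nat.lt_or_ge (s+1) k with h'|h'
        · have := ih (s+1) h'
          simpa [Nat.add_assoc, Nat.add_comm 1 s] using this
        · have hk1 : k = s + 1 := by omega
          have : b (j + t + k) = b (i + t + k) := hlast
          rw [hk1] at this
          simpa [Nat.add_assoc, Nat.add_comm 1 s] using this
    intro x hx
    rcases Nat.lt_or_ge k 1 with hk0|hk1
    · interval_cases k
      have := hdet (x + (i - j)) x (by intro t ht; omega)
      simpa using this
    · have := prop (x - j) 0 (by omega)
      have hxj : j + (x - j) = x := by omega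
      have hxi : i + (x - j) = x + (i - j) := by omega
      rw [hxj, hxi] at this
      simpa using this.symm

/-- an eventually periodic sequence has bounded complexity -/
lemma evper_card_le {b : ℕ → ℤ} (h : EvPer b) :
    ∃ C, ∀ n, (factorsOfLength b n).ncard ≤ C := by
  classical
  obtain ⟨N, P, hP, hper⟩ := h
  refine ⟨N + P, fun n => ?_⟩
  have key : ∀ i, ∃ i' < N + P, Weq b n i i' := by
    intro i
    induction i using Nat.strong_induction_on with
    | _ i ih =>
      rcases Nat.lt_or_ge i (N+P) with h'|h'
      · exact ⟨i, h', Weq.refl b n i⟩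
      · obtain ⟨i', hi', hw⟩ := ih (i - P) (by omega)
        refine ⟨i', hi', fun t ht => ?_⟩
        have : b (i - P + t + P) = b (i - P + t) := hper _ (by omega)
        have h2 : i - P + t + P = i + t := by omega
        rw [h2] at this
        exact this.trans (hw t ht)
  have hsub : factorsOfLength b n ⊆ (fun i => Wd b n i) '' (Set.Iio (N+P)) := by
    rintro u ⟨i, rfl⟩
    obtain ⟨i', hi', hw⟩ := key i
    exact ⟨i', hi', (Weq_iff.mp hw).symm⟩
  calc (factorsOfLength b n).ncard ≤ ((fun i => Wd b n i) '' (Set.Iio (N+P))).ncard :=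
        Set.ncard_le_ncard hsub ((Set.finite_Iio _).image _)
    _ ≤ (Set.Iio (N+P)).ncard := Set.ncard_image_le (Set.finite_Iio _)
    _ = N + P := by simp [Set.ncard_eq_toFinset_card']

section Main
variable {A : ℕ → ℤ}
variable (hbin : ∀ n, A n = 0 ∨ A n = 1)
variable (hcard : ∀ n, (factorsOfLength A n).ncard = n + 1)

include hcard in
lemma aperiodic : ¬ EvPer A := by
  intro h
  obtain ⟨C, hC⟩ := evper_card_le h
  have := hC (C + 1)
  rw [hcard] at this
  omega

include hbin hcard in
/-- every factor recurs beyond any point -/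
lemma recurrent : ∀ n i N, ∃ j, N ≤ j ∧ Weq A n j i := by
  intro n i N
  by_contra h
  push_neg at h
  -- the tail beyond N misses the factor Wd A n i
  set B : ℕ → ℤ := fun x => A (N + x) with hB
  have hBbin : ∀ x, B x = 0 ∨ B x = 1 := fun x => hbin (N + x)
  have hBA : ∀ k x, Wd B k x = Wd A k (N + x) := by
    intro k x
    apply Wd_eq_of
    intro t ht
    show A (N + (x + t)) = A (N + x + t)
    congr 1
    omega
  have hBsub : ∀ k, factorsOfLength B k ⊆ factorsOfLength A k := by
    rintro k u ⟨x, rfl⟩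
    exact ⟨N + x, hBA k x⟩
  have hmiss : Wd A n i ∉ factorsOfLength B n := by
    rintro ⟨x, hx⟩
    have hw : Weq A n (N + x) i := by
      apply Weq_iff.mpr
      have hx' : Wd A n i = Wd B n x := hx
      rw [hx', hBA]
    exact h (N + x) (by omega) hw
  have hsub : factorsOfLength B n ⊆ factorsOfLength A n \ {Wd A n i} := by
    intro u hu
    exact ⟨hBsub n hu, by rintro rfl; exact hmiss hu⟩
  have hle : (factorsOfLength B n).ncard ≤ n := by
    have h1 : (factorsOfLength A n \ {Wd A n i}).ncard = n := by
      rw [Set.ncard_diff_singleton_of_mem (Wd_mem A n i), hcard]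
      omega
    calc (factorsOfLength B n).ncard ≤ _ :=
        Set.ncard_le_ncard hsub ((factors_finite hbin n).diff)
      _ = n := h1
  have hev : EvPer B := morse_hedlund hBbin hle
  apply aperiodic hcard
  obtain ⟨N', P, hP, hper⟩ := hev
  refine ⟨N + N', P, hP, fun x hx => ?_⟩
  have := hper (x - N) (by omega)
  have h1 : N + (x - N + P) = x + P := by omega
  have h2 : N + (x - N) = x := by omega
  rw [hB] at this
  simpa [h1, h2] using this

include hbin hcard in
/-- all branching windows at a given level coincide (unique right-special factor) -/
lemma uniqueRS {k i j i' j' : ℕ} (hB : Branch A k i j) (hB' : Branch A k i' j') :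
    Wd A k i = Wd A k i' := by
  by_contra hne
  have := card_succ_of_two_branches hbin hB hB' hne
  rw [hcard, hcard] at this
  omega

end Main

/-- The tight Fine–Wilf style impossibility: no word `w` of length `m = q0+q1-2`
can have `w0` of period `q0`, `w1` of period `q1`, with the given boundary letters. -/
lemma lemB : ∀ μ q0 q1 m : ℕ, ∀ w : ℕ → ℤ, 2*q0 + q1 ≤ μ →
    m + 2 = q0 + q1 → 2 ≤ q0 → 2 ≤ q1 →
    (∀ j, j + q0 < m → w j = w (j + q0)) → w (m - q0) = 0 →
    (∀ j, j + q1 < m → w j = w (j + q1)) → w (m - q1) = 1 →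
    w (q0 - 1) = 1 → w (q1 - 1) = 0 → False := by
  intro μ
  induction μ using Nat.strong_induction_on with
  | _ μ ih =>
    intro q0 q1 m w hμ hm h20 h21 per0 pin0 per1 pin1 e0 e1
    rcases lt_trichotomy q0 q1 with hlt|heq|hgt
    · -- q0 < q1
      by_cases hq : q1 = q0 + 1
      · -- base case of the Euclidean descent
        subst hq
        have hm' : m = 2*q0 - 1 := by omega
        -- w 0 = 0
        have h00 : w 0 = w q0 := by
          have := per0 0 (by omega)
          rwa [zero_add] at this
        have hq0 : w q0 = 0 := by
          have : q0 + 1 - 1 = q0 := by omega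
          rw [← this]; exact e1
        -- chain: w j = w (j+1) for j < q0 - 2
        have chain : ∀ j, j < q0 - 2 → w j = w (j + 1) := by
          intro j hj
          have h1 : w j = w (j + (q0+1)) := per1 j (by omega)
          have h2 : w (j+1) = w (j + 1 + q0) := per0 (j+1) (by omega)
          have h3 : j + 1 + q0 = j + (q0 + 1) := by omega
          rw [h3] at h2
          rw [h1, h2]
        have wconst : ∀ j, j ≤ q0 - 2 → w j = w 0 := by
          intro j
          induction j with
          | zero => intro _; rfl
          | succ j ihj =>
            intro hj
            have := chain j (by omega)
            rw [← this]
            exact ihj (by omega)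
        have hlast : w (q0 - 2) = 1 := by
          have : m - (q0 + 1) = q0 - 2 := by omega
          rw [← this]; exact pin1
        have := wconst (q0 - 2) le_rfl
        rw [hlast, h00, hq0] at this
        exact absurd this (by norm_num)
      · -- descent step
        have h21' : 2 ≤ q1 - q0 := by omega
        apply ih (2*q0 + (q1 - q0)) (by omega) q0 (q1 - q0) (m - q0) w (le_refl _)
          (by omega) h20 h21'
        · intro j hj
          exact per0 j (by omega)
        · have hidx : m - q0 - q0 = m - 2*q0 := by omega
          rw [hidx]
          have h1 : w (m - 2*q0) = w (m - 2*q0 + q0) := per0 _ (by omega)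
          have h2 : m - 2*q0 + q0 = m - q0 := by omega
          rw [h2] at h1
          rw [h1]; exact pin0
        · intro j hj
          have h1 : w j = w (j + q1) := per1 j (by omega)
          have h2 : w (j + (q1 - q0)) = w (j + (q1 - q0) + q0) := per0 _ (by omega)
          have h3 : j + (q1 - q0) + q0 = j + q1 := by omega
          rw [h3] at h2
          rw [h1, h2]
        · have hidx : m - q0 - (q1 - q0) = m - q1 := by omega
          rw [hidx]; exact pin1
        · exact e0
        · have h1 : w (q1 - q0 - 1) = w (q1 - q0 - 1 + q0) := per0 _ (by omega)
          have h2 : q1 - q0 - 1 + q0 = q1 - 1 := by omega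
          rw [h2] at h1
          rw [h1]; exact e1
    · -- q0 = q1 : direct contradiction
      subst heq
      rw [pin0] at pin1
      exact absurd pin1 (by norm_num)
    · -- q0 > q1 : swap via the complement word
      apply ih (2*q1 + q0) (by omega) q1 q0 m (fun j => 1 - w j) (le_refl _)
        (by omega) h21 h20
      · intro j hj
        have := per1 j hj
        simp [this]
      · rw [pin1]; ring
      · intro j hj
        have := per0 j hj
        simp [this]
      · rw [pin0]; ring
      · rw [e1]; ring
      · rw [e0]; ring

/-- letter counts in windows -/
def cnt (b : ℕ → ℤ) (i k : ℕ) : ℤ := ∑ t ∈ Finset.range k, b (i + t)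

lemma cnt_succ (b : ℕ → ℤ) (i k : ℕ) : cnt b i (k+1) = cnt b i k + b (i+k) :=
  Finset.sum_range_succ _ _

lemma cnt_zero (b : ℕ → ℤ) (i : ℕ) : cnt b i 0 = 0 := rfl

lemma cnt_split (b : ℕ → ℤ) (i k l : ℕ) : cnt b i (k + l) = cnt b i k + cnt b (i+k) l := by
  induction l with
  | zero => simp [cnt_zero]
  | succ l ihl =>
    have h1 : k + (l+1) = (k + l) + 1 := by omega
    rw [h1, cnt_succ, ihl, cnt_succ]
    have : i + (k + l) = i + k + l := by omega
    rw [this]; ring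

lemma cnt_split_le (b : ℕ → ℤ) {k K : ℕ} (i : ℕ) (h : k ≤ K) :
    cnt b i K = cnt b i k + cnt b (i+k) (K - k) := by
  have h1 : K = k + (K - k) := by omega
  conv_lhs => rw [h1]
  exact cnt_split b i k (K - k)

lemma cnt_congr {b : ℕ → ℤ} {k i j : ℕ} (h : Weq b k i j) : cnt b i k = cnt b j k :=
  Finset.sum_congr rfl (fun t ht => h t (Finset.mem_range.mp ht))

lemma cnt_nonneg {b : ℕ → ℤ} (hbin : ∀ n, b n = 0 ∨ b n = 1) (i k : ℕ) : 0 ≤ cnt b i k := by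
  apply Finset.sum_nonneg
  intro t _
  rcases hbin (i+t) with h|h <;> rw [h] <;> norm_num

lemma cnt_le {b : ℕ → ℤ} (hbin : ∀ n, b n = 0 ∨ b n = 1) (i k : ℕ) : cnt b i k ≤ k := by
  induction k with
  | zero => simp [cnt_zero]
  | succ k ihk =>
    rw [cnt_succ]
    push_cast
    rcases hbin (i+k) with h|h <;> rw [h] <;> push_cast <;> linarith

section Main2
variable {A : ℕ → ℤ}
variable (hbin : ∀ n, A n = 0 ∨ A n = 1)

include hbin in
/-- an unbalanced pair yields the `0w0 / 1w1` configuration -/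
lemma reduction (hUB : ∃ k i j, cnt A i k + 2 ≤ cnt A j k) :
    ∃ m a b : ℕ, Weq A m (a+1) (b+1) ∧ A a = 0 ∧ A (a+1+m) = 0 ∧
      A b = 1 ∧ A (b+1+m) = 1 := by
  classical
  have hUB' : ∃ k, ∃ i j, cnt A i k + 2 ≤ cnt A j k := hUB
  obtain ⟨k0, ⟨i, j, hij⟩, hmin'⟩ :
      ∃ k, (∃ i j, cnt A i k + 2 ≤ cnt A j k) ∧
        ∀ k', k' < k → ¬ ∃ i j, cnt A i k' + 2 ≤ cnt A j k' :=
    ⟨Nat.find hUB', Nat.find_spec hUB', fun k' hk' => Nat.find_min hUB' hk'⟩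
  have hmin : ∀ k, k < k0 → ∀ i' j', cnt A j' k < cnt A i' k + 2 := by
    intro k hk i' j'
    by_contra h
    exact hmin' k hk ⟨i', j', by omega⟩
  -- d s := cnt A j s - cnt A i s
  have dstep : ∀ s, (cnt A j (s+1) - cnt A i (s+1)) - (cnt A j s - cnt A i s)
      = A (j+s) - A (i+s) := by
    intro s; rw [cnt_succ, cnt_succ]; ring
  have hk2 : 2 ≤ k0 := by
    have h1 := cnt_le hbin j k0
    have h2 := cnt_nonneg hbin i k0
    have h3 : (2:ℤ) ≤ k0 := by omega
    exact_mod_cast h3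
  have hd1 : ∀ s, 1 ≤ s → s ≤ k0 - 1 → cnt A j s - cnt A i s = 1 := by
    intro s h1 h2
    have hle : cnt A j s - cnt A i s ≤ 1 := by
      have := hmin s (by omega) i j
      omega
    have hge : 1 ≤ cnt A j s - cnt A i s := by
      by_contra h
      push_neg at h
      -- tail pair violates minimality
      have hsplitj : cnt A j k0 = cnt A j s + cnt A (j+s) (k0 - s) :=
        cnt_split_le A j (by omega)
      have hspliti : cnt A i k0 = cnt A i s + cnt A (i+s) (k0 - s) :=
        cnt_split_le A i (by omega)
      have := hmin (k0 - s) (by omega) (i+s) (j+s)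
      omega
    omega
  -- extract letters
  have habl : A j - A i = 1 := by
    have h1 := hd1 1 le_rfl (by omega)
    have : cnt A j 1 - cnt A i 1 = A j - A i := by
      rw [cnt_succ, cnt_succ, cnt_zero, cnt_zero]
      simp
    omega
  have hAi : A i = 0 ∧ A j = 1 := by
    rcases hbin i with h|h <;> rcases hbin j with h'|h' <;> rw [h, h'] at habl <;> try omega
    all_goals exact ⟨h, h'⟩
  have hdk0 : cnt A j k0 - cnt A i k0 = 2 := by
    have hle : cnt A j k0 - cnt A i k0 ≥ 2 := by omega
    have hk1 := hd1 (k0 - 1) (by omega) le_rfl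
    have hstep := dstep (k0 - 1)
    have h1 : k0 - 1 + 1 = k0 := by omega
    rw [h1] at hstep
    rcases hbin (j + (k0-1)) with h|h <;> rcases hbin (i + (k0-1)) with h'|h' <;>
      rw [h, h'] at hstep <;> omega
  have hlast : A (j + (k0 - 1)) = 1 ∧ A (i + (k0 - 1)) = 0 := by
    have hk1 := hd1 (k0 - 1) (by omega) le_rfl
    have hstep := dstep (k0 - 1)
    have h1 : k0 - 1 + 1 = k0 := by omega
    rw [h1] at hstep
    rcases hbin (j + (k0-1)) with h|h <;> rcases hbin (i + (k0-1)) with h'|h' <;>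
      rw [h, h'] at hstep <;> first | omega | exact ⟨h, h'⟩
  have hmid : ∀ t, t < k0 - 2 → A (i + 1 + t) = A (j + 1 + t) := by
    intro t ht
    have h1 := hd1 (t+1) (by omega) (by omega)
    have h2 := hd1 (t+2) (by omega) (by omega)
    have hstep := dstep (t+1)
    have : (t + 1) + 1 = t + 2 := by omega
    rw [this] at hstep
    have : A (j + (t+1)) = A (i + (t+1)) := by omega
    have hidx1 : i + 1 + t = i + (t + 1) := by omega
    have hidx2 : j + 1 + t = j + (t + 1) := by omega
    rw [hidx1, hidx2, this]
  refine ⟨k0 - 2, i, j, hmid, hAi.1, ?_, hAi.2, ?_⟩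
  · have : i + 1 + (k0 - 2) = i + (k0 - 1) := by omega
    rw [this]; exact hlast.2
  · have : j + 1 + (k0 - 2) = j + (k0 - 1) := by omega
    rw [this]; exact hlast.1

include hbin in
lemma no_0w0_1w1 (hcard : ∀ n, (factorsOfLength A n).ncard = n + 1)
    {m a b : ℕ} (hw : Weq A m (a+1) (b+1)) (ha0 : A a = 0) (ha1 : A (a+1+m) = 0)
    (hb0 : A b = 1) (hb1 : A (b+1+m) = 1) : False := by
  classical
  rcases Nat.eq_zero_or_pos m with hm0|hm
  · -- m = 0 : the words 00 and 11 are both factors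
    subst hm0
    have C01 : ∃ x, A x = 0 ∧ A (x+1) = 1 := by
      by_contra h
      push_neg at h
      apply aperiodic hcard
      refine ⟨a, 1, one_pos, ?_⟩
      have : ∀ t, A (a + t) = 0 := by
        intro t
        induction t with
        | zero => simpa using ha0
        | succ t iht =>
          rcases hbin (a + t + 1) with h'|h'
          · simpa [Nat.add_assoc] using h'
          · exact absurd h' (h (a+t) iht)
      intro x hx
      have h1 := this (x - a)
      have h2 := this (x + 1 - a)
      have e1 : a + (x - a) = x := by omega
      have e2 : a + (x + 1 - a) = x + 1 := by omega
      rw [e1] at h1; rw [e2] at h2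
      rw [h1, h2]
    have C10 : ∃ x, A x = 1 ∧ A (x+1) = 0 := by
      by_contra h
      push_neg at h
      apply aperiodic hcard
      refine ⟨b, 1, one_pos, ?_⟩
      have : ∀ t, A (b + t) = 1 := by
        intro t
        induction t with
        | zero => simpa using hb0
        | succ t iht =>
          rcases hbin (b + t + 1) with h'|h'
          · exact absurd h' (h (b+t) iht)
          · simpa [Nat.add_assoc] using h'
      intro x hx
      have h1 := this (x - b)
      have h2 := this (x + 1 - b)
      have e1 : b + (x - b) = x := by omega
      have e2 : b + (x + 1 - b) = x + 1 := by omega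
      rw [e1] at h1; rw [e2] at h2
      rw [h1, h2]
    obtain ⟨x, hx0, hx1⟩ := C01
    obtain ⟨y, hy1, hy0⟩ := C10
    have hB1 : Branch A 1 a x := by
      constructor
      · intro t ht
        interval_cases t
        simpa using ha0.trans hx0.symm
      · simp only [Nat.add_zero] at ha1 ⊢
        rw [ha1, hx1]; norm_num
    have hB2 : Branch A 1 b y := by
      constructor
      · intro t ht
        interval_cases t
        simpa using hb0.trans hy1.symm
      · simp only [Nat.add_zero] at hb1 ⊢
        rw [hb1, hy0]; norm_num
    have := uniqueRS hbin hcard hB1 hB2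
    have h00 := Wd_eq_elim this 0 one_pos
    simp only [Nat.add_zero] at h00
    rw [ha0, hb0] at h00
    norm_num at h00
  · -- m ≥ 1 : the return-word analysis
    set p := a + 1 with hp
    set r := b + 1 with hr
    -- `Occ x` : the word `w` occurs at `x`
    set Occ : ℕ → Prop := fun x => Weq A m x p with hOcc
    have hOccp : Occ p := Weq.refl A m p
    have hOccr : Occ r := hw.symm
    have hApm : A (p + m) = 0 := by rw [hp]; exact ha1
    have hArm : A (r + m) = 1 := by rw [hr]; exact hb1
    have hBpr : Branch A m p r := ⟨hOccr.symm, by rw [hApm, hArm]; norm_num⟩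
    -- determinism away from occurrences of w
    have hdet : ∀ i j, Weq A m i j → ¬ Occ i → A (i+m) = A (j+m) := by
      intro i j hij hno
      by_contra hne
      have hB : Branch A m i j := ⟨hij, hne⟩
      have := uniqueRS hbin hcard hB hBpr
      exact hno (Weq_iff.mpr this)
    -- occurrences recur
    have hex : ∀ x : ℕ, ∃ d, 0 < d ∧ Occ (x + d) := by
      intro x
      obtain ⟨j, hj, hje⟩ := recurrent hbin hcard m p (x+1)
      exact ⟨j - x, by omega, by
        have : x + (j - x) = j := by omega
        rw [this]; exact hje⟩
    set gap : ℕ → ℕ := fun x => Nat.find (hex x) with hgap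
    have gap_pos : ∀ x, 0 < gap x := fun x => (Nat.find_spec (hex x)).1
    have gap_occ : ∀ x, Occ (x + gap x) := fun x => (Nat.find_spec (hex x)).2
    have gap_min : ∀ x d, 0 < d → d < gap x → ¬ Occ (x + d) := by
      intro x d hd hdlt hocc
      exact Nat.find_min (hex x) hdlt ⟨hd, hocc⟩
    -- the key propagation lemma
    have hPROP : ∀ s i j, Weq A (m+1) i j → (∀ s', 0 < s' → s' ≤ s → ¬ Occ (i + s')) →
        Weq A (m+1) (i+s) (j+s) ∧ (∀ s', 0 < s' → s' ≤ s → ¬ Occ (j + s')) := by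
      intro s
      induction s with
      | zero =>
        intro i j h hno
        exact ⟨by simpa using h, fun s' h1 h2 => by omega⟩
      | succ s ihs =>
        intro i j h hno
        obtain ⟨h1, h2⟩ := ihs i j h (fun s' hs1 hs2 => hno s' hs1 (by omega))
        have hsm : Weq A m (i+s+1) (j+s+1) := h1.shift
        have hnoc : ¬ Occ (i+s+1) := hno (s+1) (by omega) le_rfl
        have hnoc' : ¬ Occ (j+s+1) := fun hc => hnoc (hsm.trans hc)
        have hlet : A (i+s+1+m) = A (j+s+1+m) := hdet _ _ hsm hnoc
        constructor
        · exact hsm.snoc hlet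
        · intro s' hs1 hs2
          rcases Nat.lt_or_ge s' (s+1) with h'|h'
          · exact h2 s' hs1 (by omega)
          · have : s' = s + 1 := by omega
            subst this
            exact hnoc'
    -- segments with the same choice letter look alike
    have hSEGM : ∀ x y, Occ x → Occ y → A (x+m) = A (y+m) →
        gap y = gap x ∧ ∀ t, t < gap x + m → A (x + t) = A (y + t) := by
      intro x y hx hy hc
      have hstart : Weq A (m+1) x y := (hx.trans hy.symm).snoc hc
      have hnoi : ∀ s', 0 < s' → s' ≤ gap x - 1 → ¬ Occ (x + s') := by
        intro s' h1 h2
        exact gap_min x s' h1 (by have := gap_pos x; omega)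
      obtain ⟨hWfin, hnoj⟩ := hPROP (gap x - 1) x y hstart hnoi
      have hlets : ∀ t, t < gap x + m → A (x + t) = A (y + t) := by
        intro t ht
        have hs : min t (gap x - 1) ≤ gap x - 1 := min_le_right _ _
        obtain ⟨hWs, _⟩ := hPROP (min t (gap x - 1)) x y hstart
          (fun s' h1 h2 => hnoi s' h1 (le_trans h2 hs))
        have ht' : t - min t (gap x - 1) < m + 1 := by
          have := gap_pos x
          omega
        have := hWs (t - min t (gap x - 1)) ht'
        have e1 : x + min t (gap x - 1) + (t - min t (gap x - 1)) = x + t := by omega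
        have e2 : y + min t (gap x - 1) + (t - min t (gap x - 1)) = y + t := by omega
        rw [e1, e2] at this
        exact this
      constructor
      · -- gap y = gap x
        have hoccyd : Occ (y + gap x) := by
          have h1 : Weq A m (x + gap x) (y + gap x) := by
            intro t ht
            have h2 := hlets (gap x + t) (by omega)
            have e1 : x + (gap x + t) = x + gap x + t := by omega
            have e2 : y + (gap x + t) = y + gap x + t := by omega
            rw [e1, e2] at h2
            exact h2
          exact h1.symm.trans (gap_occ x)
        have hle : gap y ≤ gap x := Nat.find_le ⟨gap_pos x, hoccyd⟩
        have hge : gap x ≤ gap y := by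
          by_contra hlt
          push_neg at hlt
          exact hnoj (gap y) (gap_pos y) (by have := gap_pos x; omega) (gap_occ y)
        omega
      · exact hlets
    set q0 : ℕ := gap p with hq0
    set q1 : ℕ := gap r with hq1
    set e0 : ℤ := A (p + (q0 - 1)) with he0
    set e1 : ℤ := A (r + (q1 - 1)) with he1
    -- covering: every position at or after a base occurrence lies in a segment
    have hCOV : ∀ base z, Occ base → base ≤ z →
        ∃ x, Occ x ∧ base ≤ x ∧ x ≤ z ∧ z < x + gap x := by
      intro base z hbase hbz
      set x := Nat.findGreatest Occ z with hx
      have hoccx : Occ x := Nat.findGreatest_spec hbz hbase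
      have hxb : base ≤ x := Nat.le_findGreatest hbz hbase
      have hxz : x ≤ z := Nat.findGreatest_le z
      refine ⟨x, hoccx, hxb, hxz, ?_⟩
      by_contra hcon
      push_neg at hcon
      have : ¬ Occ (x + gap x) :=
        Nat.findGreatest_is_greatest (by have := gap_pos x; omega) hcon
      exact this (gap_occ x)
    -- the letter preceding any non-initial occurrence is e0 or e1
    have hPRED : ∀ j, Occ j → p + 1 ≤ j → A (j - 1) = e0 ∨ A (j - 1) = e1 := by
      intro j hj hpj
      obtain ⟨x, hoccx, hpx, hxz, hzlt⟩ := hCOV p (j-1) hOccp (by omega)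
      have hjx : j = x + gap x := by
        have h1 : j ≤ x + gap x := by omega
        rcases Nat.lt_or_ge j (x + gap x) with h2|h2
        · exfalso
          exact gap_min x (j - x) (by omega) (by omega)
            (by have : x + (j - x) = j := by omega
                rw [this]; exact hj)
        · omega
      rcases hbin (x + m) with hc|hc
      · left
        obtain ⟨hgx, hseg⟩ := hSEGM p x hOccp hoccx (by rw [hApm, hc])
        have := hseg (gap p - 1) (by have := gap_pos p; omega)
        show A (j - 1) = A (p + (gap p - 1))
        have e : x + (gap p - 1) = j - 1 := by
          rw [hjx, hgx]
          have := gap_pos p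
          omega
        rw [e] at this
        exact this.symm
      · right
        obtain ⟨hgx, hseg⟩ := hSEGM r x hOccr hoccx (by rw [hArm, hc])
        have := hseg (gap r - 1) (by have := gap_pos r; omega)
        show A (j - 1) = A (r + (gap r - 1))
        have e : x + (gap r - 1) = j - 1 := by
          rw [hjx, hgx]
          have := gap_pos r
          omega
        rw [e] at this
        exact this.symm
    -- both letters occur as predecessors, so e0 ≠ e1
    have hpred0 : (0:ℤ) = e0 ∨ (0:ℤ) = e1 := by
      obtain ⟨j, hjge, hje⟩ := recurrent hbin hcard (m+1) a (p+1)
      have hj0 : A j = 0 := by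
        have := hje 0 (by omega)
        simpa [ha0] using this
      have hocc : Occ (j + 1) := by
        have := hje.shift
        exact this.trans hOccp
      have hthis := hPRED (j+1) hocc (by omega)
      have hidx : j + 1 - 1 = j := by omega
      rw [hidx, hj0] at hthis
      exact hthis.imp Eq.symm Eq.symm |>.imp Eq.symm Eq.symm
    have hpred1 : (1:ℤ) = e0 ∨ (1:ℤ) = e1 := by
      obtain ⟨j, hjge, hje⟩ := recurrent hbin hcard (m+1) b (p+1)
      have hj1 : A j = 1 := by
        have := hje 0 (by omega)
        simpa [hb0] using this
      have hocc : Occ (j + 1) := by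
        have := hje.shift
        exact this.trans hOccr
      have hthis := hPRED (j+1) hocc (by omega)
      have hidx : j + 1 - 1 = j := by omega
      rw [hidx, hj1] at hthis
      exact hthis
    have hee : e0 ≠ e1 := by
      rcases hpred0 with h0|h0 <;> rcases hpred1 with h1|h1 <;> intro hcon <;> omega
    -- injectivity of offsets within the `0`-cycle
    have hINJ : ∀ base, Occ base → ∀ off off', off < off' → off' < gap base →
        ¬ Weq A (m+1) (base + off) (base + off') := by
      intro base hbase off off' holt holt' hweq
      have hno : ∀ s', 0 < s' → s' ≤ gap base - off' → ¬ Occ (base + off + s') := by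
        intro s' h1 h2
        have : base + off + s' = base + (off + s') := by omega
        rw [this]
        exact gap_min base (off + s') (by omega) (by omega)
      obtain ⟨_, hnoj⟩ := hPROP (gap base - off') _ _ hweq hno
      have := hnoj (gap base - off') (by omega) le_rfl
      have e : base + off' + (gap base - off') = base + gap base := by omega
      rw [e] at this
      exact this (gap_occ base)
    -- cross-injectivity between the two cycles
    have hDISJ : ∀ off off', off < q0 → off' < q1 →
        ¬ Weq A (m+1) (p + off) (r + off') := by
      intro off off' h0 h1 hweq
      rcases Nat.eq_zero_or_pos off with rfl|hoffpos
      · rcases Nat.eq_zero_or_pos off' with rfl|hoff'pos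
        · have := hweq m (by omega)
          simp only [Nat.add_zero] at this
          rw [hApm, hArm] at this
          norm_num at this
        · have hocc : Occ (r + off') := by
          -- m-prefix equality
            have hpre : Weq A m p (r + off') := by
              intro t ht
              have := hweq t (by omega)
              simpa using this
            exact hpre.symm.trans hOccp
          exact gap_min r off' hoff'pos h1 hocc
      · rcases Nat.eq_zero_or_pos off' with rfl|hoff'pos
        · have hocc : Occ (p + off) := by
            have hpre : Weq A m (p + off) r := by
              intro t ht
              have := hweq t (by omega)
              simpa using this
            exact hpre.trans hOccr
          exact gap_min p off hoffpos h0 hocc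
        · -- both positive : equal exit times, then e0 = e1
          have hs0 : 0 < q0 - off := by omega
          have hs1 : 0 < q1 - off' := by omega
          have hnoP : ∀ s', 0 < s' → s' ≤ q0 - off - 1 → ¬ Occ (p + off + s') := by
            intro s' hh1 hh2
            have : p + off + s' = p + (off + s') := by omega
            rw [this]
            exact gap_min p (off + s') (by omega) (by omega)
          have hnoR : ∀ s', 0 < s' → s' ≤ q1 - off' - 1 → ¬ Occ (r + off' + s') := by
            intro s' hh1 hh2
            have : r + off' + s' = r + (off' + s') := by omega
            rw [this]
            exact gap_min r (off' + s') (by omega) (by omega)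
          have hge1 : q0 - off ≤ q1 - off' := by
            by_contra hcon
            push_neg at hcon
            obtain ⟨_, hnoj⟩ := hPROP (q0 - off - 1) _ _ hweq hnoP
            have hfin := hnoj (q1 - off') hs1 (by omega)
            have e : r + off' + (q1 - off') = r + q1 := by omega
            rw [e] at hfin
            exact hfin (gap_occ r)
          have hge2 : q1 - off' ≤ q0 - off := by
            by_contra hcon
            push_neg at hcon
            obtain ⟨_, hnoj⟩ := hPROP (q1 - off' - 1) _ _ hweq.symm hnoR
            have hfin := hnoj (q0 - off) hs0 (by omega)
            have e : p + off + (q0 - off) = p + q0 := by omega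
            rw [e] at hfin
            exact hfin (gap_occ p)
          obtain ⟨hWs, _⟩ := hPROP (q0 - off - 1) _ _ hweq hnoP
          have hfin := hWs 0 (by omega)
          have ei : p + off + (q0 - off - 1) + 0 = p + (q0 - 1) := by omega
          have ej : r + off' + (q0 - off - 1) + 0 = r + (q1 - 1) := by omega
          rw [ei, ej] at hfin
          exact hee hfin
    -- counting the factors of length m+1 : q0 + q1 = m + 2
    have hCOUNT : q0 + q1 = m + 2 := by
      set F0 : Finset (List ℤ) :=
        (Finset.range q0).image (fun off => Wd A (m+1) (p + off)) with hF0
      set F1 : Finset (List ℤ) :=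
        (Finset.range q1).image (fun off => Wd A (m+1) (r + off)) with hF1
      have hsub : factorsOfLength A (m+1) = ↑(F0 ∪ F1) := by
        ext u
        constructor
        · rintro ⟨i0, rfl⟩
          show Wd A (m+1) i0 ∈ ↑(F0 ∪ F1)
          obtain ⟨j, hj, hje⟩ := recurrent hbin hcard (m+1) i0 p
          obtain ⟨x, hoccx, hpx, hxz, hzlt⟩ := hCOV p j hOccp hj
          have huj : Wd A (m+1) i0 = Wd A (m+1) j := (Weq_iff.mp hje).symm
          rcases hbin (x+m) with hc|hc
          · obtain ⟨hgx, hseg⟩ := hSEGM p x hOccp hoccx (by rw [hApm, hc])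
            have hmem : Wd A (m+1) j = Wd A (m+1) (p + (j - x)) := by
              apply Weq_iff.mp
              intro t ht
              have h2 := hseg (j - x + t) (by omega)
              have eL : x + (j - x + t) = j + t := by omega
              have eR : p + (j - x + t) = p + (j - x) + t := by omega
              rw [eL, eR] at h2
              exact h2.symm
            rw [huj, hmem]
            apply Finset.mem_coe.mpr
            apply Finset.mem_union_left
            exact Finset.mem_image.mpr ⟨j - x, Finset.mem_range.mpr (by omega), rfl⟩
          · obtain ⟨hgx, hseg⟩ := hSEGM r x hOccr hoccx (by rw [hArm, hc])
            have hmem : Wd A (m+1) j = Wd A (m+1) (r + (j - x)) := by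
              apply Weq_iff.mp
              intro t ht
              have h2 := hseg (j - x + t) (by omega)
              have eL : x + (j - x + t) = j + t := by omega
              have eR : r + (j - x + t) = r + (j - x) + t := by omega
              rw [eL, eR] at h2
              exact h2.symm
            rw [huj, hmem]
            apply Finset.mem_coe.mpr
            apply Finset.mem_union_right
            exact Finset.mem_image.mpr ⟨j - x, Finset.mem_range.mpr (by omega), rfl⟩
        · intro hu
          rcases Finset.mem_union.mp (Finset.mem_coe.mp hu) with h|h
          · obtain ⟨off, _, rfl⟩ := Finset.mem_image.mp h
            exact ⟨p + off, rfl⟩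
          · obtain ⟨off, _, rfl⟩ := Finset.mem_image.mp h
            exact ⟨r + off, rfl⟩
      have hdisj : Disjoint F0 F1 := by
        rw [Finset.disjoint_left]
        intro u hu0 hu1
        obtain ⟨off, hoff, he⟩ := Finset.mem_image.mp hu0
        obtain ⟨off', hoff', he'⟩ := Finset.mem_image.mp hu1
        exact hDISJ off off' (Finset.mem_range.mp hoff) (Finset.mem_range.mp hoff')
          (Weq_iff.mpr (he.trans he'.symm))
      have hc0 : F0.card = q0 := by
        rw [hF0, Finset.card_image_of_injOn, Finset.card_range]
        intro off hoff off' hoff' hW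
        have h1 : off < q0 := Finset.mem_range.mp (by simpa using hoff)
        have h2 : off' < q0 := Finset.mem_range.mp (by simpa using hoff')
        by_contra hne
        rcases Nat.lt_or_ge off off' with hlt|hge
        · exact hINJ p hOccp off off' hlt h2 (Weq_iff.mpr hW)
        · exact hINJ p hOccp off' off (by omega) h1 (Weq_iff.mpr hW).symm
      have hc1 : F1.card = q1 := by
        rw [hF1, Finset.card_image_of_injOn, Finset.card_range]
        intro off hoff off' hoff' hW
        have h1 : off < q1 := Finset.mem_range.mp (by simpa using hoff)
        have h2 : off' < q1 := Finset.mem_range.mp (by simpa using hoff')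
        by_contra hne
        rcases Nat.lt_or_ge off off' with hlt|hge
        · exact hINJ r hOccr off off' hlt h2 (Weq_iff.mpr hW)
        · exact hINJ r hOccr off' off (by omega) h1 (Weq_iff.mpr hW).symm
      have := hcard (m+1)
      rw [hsub, Set.ncard_coe_finset, Finset.card_union_of_disjoint hdisj, hc0, hc1] at this
      omega
    -- existence of a "switch" pattern after any base, unless eventually periodic
    have hPAT : ∀ (base : ℕ) (c : ℤ), Occ base → A (base + m) = c →
        ∃ x, Occ x ∧ A (x + m) = c ∧ A (x + gap x + m) ≠ c := by
      intro base c hbase hbasec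
      by_contra hnp
      push_neg at hnp
      have hall : ∀ j, Occ j → base ≤ j → A (j + m) = c := by
        intro j
        induction j using Nat.strong_induction_on with
        | _ j ihj =>
          intro hj hbj
          rcases Nat.eq_or_lt_of_le hbj with heq|hlt
          · rw [← heq]; exact hbasec
          · obtain ⟨x, hoccx, hbx, hxz, hzlt⟩ := hCOV base (j-1) hbase (by omega)
            have hjx : j = x + gap x := by
              rcases Nat.lt_or_ge j (x + gap x) with h2|h2
              · exfalso
                exact gap_min x (j - x) (by omega) (by omega)
                  (by have e : x + (j - x) = j := by omega
                      rw [e]; exact hj)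
              · omega
            have hx0 : A (x + m) = c := ihj x (by omega) hoccx hbx
            have := hnp x hoccx hx0
            rw [← hjx] at this
            exact this
      apply aperiodic hcard
      refine ⟨base, gap base, gap_pos base, ?_⟩
      intro z hz
      obtain ⟨x, hoccx, hbx, hxz, hzlt⟩ := hCOV base z hbase hz
      have hcx : A (x + m) = c := hall x hoccx hbx
      obtain ⟨hgx, _⟩ := hSEGM base x hbase hoccx (by rw [hbasec, hcx])
      have hoccnx : Occ (x + gap x) := gap_occ x
      have hcnx : A (x + gap x + m) = c := hall _ hoccnx (by omega)
      obtain ⟨_, hseg2⟩ := hSEGM x (x + gap x) hoccx hoccnx (by rw [hcx, hcnx])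
      have := hseg2 (z - x) (by omega)
      have eL : x + (z - x) = z := by omega
      have eR : x + gap x + (z - x) = z + gap base := by omega
      rw [eL, eR] at this
      exact this.symm
    -- case analysis on e0
    rcases hbin (p + (q0 - 1)) with hcase|hcase
    · -- Case A : e0 = 0, hence e1 = 1
      have he1v : e1 = 1 := by
        rcases hbin (r + (q1 - 1)) with h|h
        · exact absurd (hcase.trans h.symm) hee
        · exact h
      have he0v : e0 = (0:ℤ) := hcase
      -- pattern 0 → not 0 (i.e. 0 → 1)
      obtain ⟨x0, hoccx0, hcx0, hnx0⟩ := hPAT p 0 hOccp hApm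
      obtain ⟨x1, hoccx1, hcx1, hnx1⟩ := hPAT r 1 hOccr hArm
      obtain ⟨hgx0, hseg0⟩ := hSEGM p x0 hOccp hoccx0 (by rw [hApm, hcx0])
      obtain ⟨hgx1, hseg1⟩ := hSEGM r x1 hOccr hoccx1 (by rw [hArm, hcx1])
      set j := x0 + gap x0 with hj
      set j' := x1 + gap x1 with hj'
      have hj1 : 1 ≤ j := by have := gap_pos x0; omega
      have hj'1 : 1 ≤ j' := by have := gap_pos x1; omega
      have hoccj : Occ j := gap_occ x0
      have hoccj' : Occ j' := gap_occ x1
      have hAj1 : A (j + m) = 1 := by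
        rcases hbin (j + m) with h|h
        · exact absurd h hnx0
        · exact h
      have hAj'0 : A (j' + m) = 0 := by
        rcases hbin (j' + m) with h|h
        · exact h
        · exact absurd h hnx1
      have hAjm1 : A (j - 1) = 0 := by
        have := hseg0 (gap p - 1) (by have := gap_pos p; omega)
        have eR : x0 + (gap p - 1) = j - 1 := by
          rw [hj, hgx0]
          have := gap_pos p
          omega
        rw [eR] at this
        rw [← this]
        exact he0v
      have hAj'm1 : A (j' - 1) = 1 := by
        have := hseg1 (gap r - 1) (by have := gap_pos r; omega)
        have eR : x1 + (gap r - 1) = j' - 1 := by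
          rw [hj', hgx1]
          have := gap_pos r
          omega
        rw [eR] at this
        rw [← this]
        exact he1v
      have hB1 : Branch A (m+1) (j-1) a := by
        constructor
        · intro t ht
          rcases Nat.eq_zero_or_pos t with rfl|htp
          · simp only [Nat.add_zero]
            rw [hAjm1, ha0]
          · have h1 : A (j - 1 + t) = A (j + (t - 1)) := by congr 1; omega
            have h2 : A (j + (t-1)) = A (p + (t-1)) := hoccj (t-1) (by omega)
            have h3 : A (p + (t-1)) = A (a + t) := by congr 1; omega
            rw [h1, h2, h3]
        · have h1 : j - 1 + (m + 1) = j + m := by omega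
          have h2 : a + (m + 1) = p + m := by omega
          rw [h1, h2, hAj1, hApm]
          norm_num
      have hB2 : Branch A (m+1) (j'-1) b := by
        constructor
        · intro t ht
          rcases Nat.eq_zero_or_pos t with rfl|htp
          · simp only [Nat.add_zero]
            rw [hAj'm1, hb0]
          · have h1 : A (j' - 1 + t) = A (j' + (t - 1)) := by congr 1; omega
            have h2 : A (j' + (t-1)) = A (p + (t-1)) := hoccj' (t-1) (by omega)
            have h2' : A (p + (t-1)) = A (r + (t-1)) := (hOccr (t-1) (by omega)).symm
            have h3 : A (r + (t-1)) = A (b + t) := by congr 1; omega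
            rw [h1, h2, h2', h3]
        · have h1 : j' - 1 + (m + 1) = j' + m := by omega
          have h2 : b + (m + 1) = r + m := by omega
          rw [h1, h2, hAj'0, hArm]
          norm_num
      have := uniqueRS hbin hcard hB1 hB2
      have h00 := Wd_eq_elim this 0 (by omega)
      simp only [Nat.add_zero] at h00
      rw [hAjm1, hAj'm1] at h00
      norm_num at h00
    · -- Case B : e0 = 1, hence e1 = 0 ; Fine–Wilf contradiction
      have he0v : e0 = (1:ℤ) := hcase
      have he1v : e1 = 0 := by
        rcases hbin (r + (q1 - 1)) with h|h
        · exact h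
        · exact absurd (hcase.trans h.symm) hee
      have hq1ge : 2 ≤ q1 := by
        by_contra hcon
        push_neg at hcon
        have hq11 : q1 = 1 := by have := gap_pos r; omega
        have hoccr1 : Occ (r + 1) := by
          have := gap_occ r
          rw [show gap r = 1 from hq11] at this
          exact this
        have hch : ∀ t, t ≤ m → A (r + t) = A r := by
          intro t
          induction t with
          | zero => intro _; rfl
          | succ t iht =>
            intro htm
            have h1 : A (r + (t+1)) = A (r + 1 + t) := by congr 1; omega
            have h2 : A (r + 1 + t) = A (p + t) := hoccr1 t (by omega)
            have h3 : A (p + t) = A (r + t) := (hOccr t (by omega)).symm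
            rw [h1, h2, h3]
            exact iht (by omega)
        have hAr : A r = 1 := by
          have := hch m le_rfl
          rw [← this]; exact hArm
        have : e1 = 1 := by
          rw [he1, hq11]
          simpa using hAr
        rw [he1v] at this
        norm_num at this
      have hq0ge : 2 ≤ q0 := by
        by_contra hcon
        push_neg at hcon
        have hq01 : q0 = 1 := by have := gap_pos p; omega
        have hoccp1 : Occ (p + 1) := by
          have := gap_occ p
          rw [show gap p = 1 from hq01] at this
          exact this
        have hch : ∀ t, t ≤ m → A (p + t) = A p := by
          intro t
          induction t with
          | zero => intro _; rfl
          | succ t iht =>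
            intro htm
            have h1 : A (p + (t+1)) = A (p + 1 + t) := by congr 1; omega
            have h2 : A (p + 1 + t) = A (p + t) := hoccp1 t (by omega)
            rw [h1, h2]
            exact iht (by omega)
        have hAp : A p = 0 := by
          have := hch m le_rfl
          rw [← this]; exact hApm
        have : e0 = 0 := by
          rw [he0, hq01]
          simpa using hAp
        rw [he0v] at this
        norm_num at this
      have hoccpq : Occ (p + q0) := gap_occ p
      have hoccrq : Occ (r + q1) := gap_occ r
      apply lemB (2*q0 + q1) q0 q1 m (fun t => A (p + t)) le_rfl (by omega)
        hq0ge hq1ge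
      · -- period q0 of w0
        intro t ht
        show A (p + t) = A (p + (t + q0))
        have h1 : A (p + q0 + t) = A (p + t) := hoccpq t (by omega)
        have h2 : p + q0 + t = p + (t + q0) := by omega
        rw [h2] at h1
        exact h1.symm
      · -- pin : w (m - q0) = 0
        show A (p + (m - q0)) = 0
        have h1 : A (p + q0 + (m - q0)) = A (p + (m - q0)) := hoccpq (m - q0) (by omega)
        have h2 : p + q0 + (m - q0) = p + m := by omega
        rw [h2] at h1
        rw [← h1]; exact hApm
      · -- period q1 of w1
        intro t ht
        show A (p + t) = A (p + (t + q1))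
        have h1 : A (r + q1 + t) = A (p + t) := hoccrq t (by omega)
        have h2 : A (r + (q1 + t)) = A (p + (q1 + t)) := hOccr (q1 + t) (by omega)
        have h3 : r + q1 + t = r + (q1 + t) := by omega
        rw [h3] at h1
        rw [← h1, h2]
        congr 1
        omega
      · -- pin : w (m - q1) = 1
        show A (p + (m - q1)) = 1
        have h1 : A (r + q1 + (m - q1)) = A (p + (m - q1)) := hoccrq (m - q1) (by omega)
        have h2 : r + q1 + (m - q1) = r + m := by omega
        rw [h2] at h1
        rw [← h1]; exact hArm
      · -- w (q0 - 1) = 1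
        show A (p + (q0 - 1)) = 1
        exact he0v
      · -- w (q1 - 1) = 0
        show A (p + (q1 - 1)) = 0
        have h1 : A (r + (q1 - 1)) = A (p + (q1 - 1)) := hOccr (q1 - 1) (by omega)
        rw [← h1]
        exact he1v

include hbin in
lemma balanced (hcard : ∀ n, (factorsOfLength A n).ncard = n + 1) :
    ∀ k i j, cnt A j k ≤ cnt A i k + 1 := by
  by_contra h
  push_neg at h
  obtain ⟨k, i, j, h⟩ := h
  obtain ⟨m, a, b, hw, ha0, ha1, hb0, hb1⟩ := reduction hbin ⟨k, i, j, by omega⟩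
  exact no_0w0_1w1 hbin hcard hw ha0 ha1 hb0 hb1

include hbin in
lemma cnt_block_lower (hbal : ∀ k i j, cnt A j k ≤ cnt A i k + 1) (i k : ℕ) :
    ∀ M : ℕ, M * (cnt A i k - 1) ≤ cnt A 0 (M * k) ∧ cnt A 0 (M * k) ≤ M * (cnt A i k + 1) := by
  intro M
  induction M with
  | zero => simp [cnt_zero]
  | succ M ihM =>
    have hsplit : cnt A 0 ((M+1) * k) = cnt A 0 (M * k) + cnt A (M * k) k := by
      have h1 : (M+1) * k = M * k + k := by ring
      rw [h1, cnt_split]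
      simp
    have h2 := hbal k i (M * k)
    have h3 := hbal k (M * k) i
    constructor
    · have : ((M:ℤ)+1) * (cnt A i k - 1) = M * (cnt A i k - 1) + (cnt A i k - 1) := by ring
      push_cast
      push_cast at ihM
      rw [hsplit]
      push_cast
      nlinarith [ihM.1]
    · push_cast
      push_cast at ihM
      rw [hsplit]
      push_cast
      nlinarith [ihM.2]

end Main2

section Alpha
variable {A : ℕ → ℤ} {α : ℝ}
variable (hbin : ∀ n, A n = 0 ∨ A n = 1)
variable (hirr : Irrational α) (hslope : HasSlope A α)

include hirr in
lemma irr_mul (k : ℕ) (hk : k ≠ 0) : Irrational ((k:ℝ) * α) := by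
  have := Irrational.natCast_mul hirr (m := k) hk
  simpa using this

lemma cnt0_cast (A : ℕ → ℤ) (n : ℕ) :
    ((cnt A 0 n : ℤ) : ℝ) = ∑ i ∈ Finset.range n, (A i : ℝ) := by
  rw [cnt]
  push_cast
  apply Finset.sum_congr rfl
  intro t _
  rw [Nat.zero_add]

include hbin hirr hslope in
lemma countC (hbal : ∀ k i j, cnt A j k ≤ cnt A i k + 1) :
    ∀ i k, cnt A i k = ⌊(k:ℝ) * α⌋ ∨ cnt A i k = ⌊(k:ℝ) * α⌋ + 1 := by
  intro i k
  rcases Nat.eq_zero_or_pos k with rfl|hk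
  · left
    simp [cnt_zero]
  · set c : ℤ := cnt A i k with hc
    have hkR : (0:ℝ) < k := by exact_mod_cast hk
    have hcomp : Filter.Tendsto (fun M : ℕ => M * k) Filter.atTop Filter.atTop := by
      apply Filter.tendsto_atTop_atTop.mpr
      intro bb
      exact ⟨bb, fun M hM => le_trans hM (Nat.le_mul_of_pos_right M hk)⟩
    have h1 : Filter.Tendsto (fun M : ℕ => ((cnt A 0 (M*k) : ℤ) : ℝ) / ((M*k : ℕ) : ℝ))
        Filter.atTop (nhds α) := by
      have := hslope.comp hcomp
      apply this.congr
      intro M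
      simp only [Function.comp]
      rw [cnt0_cast]
    have hblock := cnt_block_lower hbin hbal i k
    have hlow : ((c:ℝ) - 1) / k ≤ α := by
      apply ge_of_tendsto h1
      apply Filter.eventually_atTop.mpr
      refine ⟨1, fun M hM => ?_⟩
      have hb := (hblock M).1
      have hMR : (0:ℝ) < M := by
        have : (1:ℕ) ≤ M := hM
        exact_mod_cast Nat.lt_of_lt_of_le Nat.zero_lt_one hM
      have hMk : (0:ℝ) < ((M*k : ℕ) : ℝ) := by
        push_cast
        positivity
      rw [div_le_div_iff₀ hkR hMk]
      have hbR : ((M:ℝ)) * ((c:ℝ) - 1) ≤ ((cnt A 0 (M*k) : ℤ) : ℝ) := by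
        exact_mod_cast hb
      push_cast
      push_cast at hbR
      nlinarith
    have hhigh : α ≤ ((c:ℝ) + 1) / k := by
      apply le_of_tendsto h1
      apply Filter.eventually_atTop.mpr
      refine ⟨1, fun M hM => ?_⟩
      have hb := (hblock M).2
      have hMR : (0:ℝ) < M := by
        exact_mod_cast Nat.lt_of_lt_of_le Nat.zero_lt_one hM
      have hMk : (0:ℝ) < ((M*k : ℕ) : ℝ) := by
        push_cast
        positivity
      rw [div_le_div_iff₀ hMk hkR]
      have hbR : ((cnt A 0 (M*k) : ℤ) : ℝ) ≤ ((M:ℝ)) * ((c:ℝ) + 1) := by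
        exact_mod_cast hb
      push_cast
      push_cast at hbR
      nlinarith
    have hirrk : Irrational ((k:ℝ) * α) := irr_mul hirr k (by omega)
    have hlow' : ((c:ℝ) - 1) ≤ (k:ℝ) * α := by
      rw [div_le_iff₀ hkR] at hlow
      nlinarith
    have hhigh' : (k:ℝ) * α ≤ ((c:ℝ) + 1) := by
      rw [le_div_iff₀ hkR] at hhigh
      nlinarith
    have hlowst : ((c:ℝ) - 1) < (k:ℝ) * α := by
      rcases lt_or_eq_of_le hlow' with h|h
      · exact h
      · exfalso
        apply hirrk.ne_int (c - 1)
        rw [← h]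
        push_cast
        ring
    have hhighst : (k:ℝ) * α < ((c:ℝ) + 1) := by
      rcases lt_or_eq_of_le hhigh' with h|h
      · exact h
      · exfalso
        apply hirrk.ne_int (c + 1)
        rw [h]
        push_cast
        ring
    have hf1 : ⌊(k:ℝ) * α⌋ ≤ c := by
      have h2 : ((⌊(k:ℝ) * α⌋ : ℤ) : ℝ) < (c:ℝ) + 1 := lt_of_le_of_lt (Int.floor_le _) hhighst
      have : (⌊(k:ℝ) * α⌋ : ℤ) < c + 1 := by exact_mod_cast h2
      omega
    have hf2 : c ≤ ⌊(k:ℝ) * α⌋ + 1 := by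
      have h2 : (c:ℤ) - 1 ≤ ⌊(k:ℝ) * α⌋ := by
        apply Int.le_floor.mpr
        push_cast
        linarith
      omega
    omega

section D
variable (A α) in
noncomputable def Df : ℕ → ℝ := fun x => ((cnt A 0 x : ℤ) : ℝ) - x * α

variable (hC : ∀ i k, cnt A i k = ⌊(k:ℝ) * α⌋ ∨ cnt A i k = ⌊(k:ℝ) * α⌋ + 1)

include hC in
lemma Df_diff (x k : ℕ) : Df A α (x+k) - Df A α x = ((cnt A x k : ℤ) : ℝ) - k * α := by
  rw [Df, Df]
  have := cnt_split A 0 x k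
  rw [show 0 + x = x by omega] at this
  rw [this]
  push_cast
  ring

include hC in
lemma Df_le_one (x : ℕ) : Df A α x ≤ 1 := by
  rcases Nat.eq_zero_or_pos x with rfl|hx
  · simp [Df, cnt_zero]
  · have h1 : Df A α (0 + x) - Df A α 0 = ((cnt A 0 x : ℤ) : ℝ) - x * α := Df_diff hC 0 x
    have h0 : Df A α 0 = 0 := by simp [Df, cnt_zero]
    rw [h0, sub_zero, show (0 + x) = x by omega] at h1
    rcases hC 0 x with h|h <;> rw [h] at h1 <;> rw [h1] <;> push_cast
    · have := Int.floor_le ((x:ℝ) * α)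
      linarith
    · have := Int.floor_le ((x:ℝ) * α)
      linarith

include hC in
lemma Df_ge_neg_one (x : ℕ) : -1 ≤ Df A α x := by
  rcases Nat.eq_zero_or_pos x with rfl|hx
  · simp [Df, cnt_zero]
  · have h1 : Df A α (0 + x) - Df A α 0 = ((cnt A 0 x : ℤ) : ℝ) - x * α := Df_diff hC 0 x
    have h0 : Df A α 0 = 0 := by simp [Df, cnt_zero]
    rw [h0, sub_zero, show (0 + x) = x by omega] at h1
    rcases hC 0 x with h|h <;> rw [h] at h1 <;> rw [h1] <;> push_cast
    · have := Int.lt_floor_add_one ((x:ℝ) * α)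
      linarith
    · have := Int.lt_floor_add_one ((x:ℝ) * α)
      linarith

include hC in
lemma extremal_low (n : ℕ) (hn : 1 ≤ n) :
    ∃ x, ∀ k, 1 ≤ k → k ≤ n → cnt A x k = ⌊(k:ℝ) * α⌋ := by
  classical
  have hne : (Set.range (Df A α)).Nonempty := ⟨Df A α 0, 0, rfl⟩
  have hbdd : BddAbove (Set.range (Df A α)) := by
    refine ⟨1, ?_⟩
    rintro y ⟨x, rfl⟩
    exact Df_le_one hC x
  set M := sSup (Set.range (Df A α)) with hM
  have hIcc : (Finset.Icc 1 n).Nonempty := ⟨1, Finset.mem_Icc.mpr ⟨le_rfl, hn⟩⟩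
  set ε : ℝ := (Finset.Icc 1 n).inf' hIcc (fun k => ((⌊(k:ℝ) * α⌋ : ℝ) + 1) - k * α) with hε
  have hεpos : 0 < ε := by
    rw [hε]
    apply (Finset.lt_inf'_iff _).mpr
    intro k hk
    have := Int.lt_floor_add_one ((k:ℝ) * α)
    push_cast
    linarith
  obtain ⟨y, ⟨x, rfl⟩, hy⟩ := exists_lt_of_lt_csSup hne (sub_lt_self M hεpos)
  refine ⟨x, fun k hk1 hk2 => ?_⟩
  rcases hC x k with h|h
  · exact h
  · exfalso
    have hDk : Df A α (x+k) ≤ M := le_csSup hbdd ⟨x+k, rfl⟩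
    have hdiff := Df_diff hC x k
    rw [h] at hdiff
    have hle : ε ≤ ((⌊(k:ℝ) * α⌋ : ℝ) + 1) - k * α := by
      rw [hε]
      have := Finset.inf'_le (fun k : ℕ => ((⌊(k:ℝ) * α⌋ : ℝ) + 1) - (k:ℝ) * α)
        (Finset.mem_Icc.mpr ⟨hk1, hk2⟩)
      exact this
    push_cast at hdiff
    linarith

include hC hirr in
lemma extremal_high (n : ℕ) (hn : 1 ≤ n) :
    ∃ x, ∀ k, 1 ≤ k → k ≤ n → cnt A x k = ⌊(k:ℝ) * α⌋ + 1 := by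
  classical
  have hne : (Set.range (Df A α)).Nonempty := ⟨Df A α 0, 0, rfl⟩
  have hbdd : BddBelow (Set.range (Df A α)) := by
    refine ⟨-1, ?_⟩
    rintro y ⟨x, rfl⟩
    exact Df_ge_neg_one hC x
  set I := sInf (Set.range (Df A α)) with hI
  have hIcc : (Finset.Icc 1 n).Nonempty := ⟨1, Finset.mem_Icc.mpr ⟨le_rfl, hn⟩⟩
  set ε : ℝ := (Finset.Icc 1 n).inf' hIcc (fun k => (k:ℝ) * α - (⌊(k:ℝ) * α⌋ : ℝ)) with hε
  have hεpos : 0 < ε := by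
    rw [hε]
    apply (Finset.lt_inf'_iff _).mpr
    intro k hk
    have hkk : 1 ≤ k := (Finset.mem_Icc.mp hk).1
    have hf := Int.floor_le ((k:ℝ) * α)
    rcases lt_or_eq_of_le hf with h|h
    · linarith
    · exfalso
      exact (irr_mul hirr k (by omega)).ne_int ⌊(k:ℝ) * α⌋ h.symm
  obtain ⟨y, ⟨x, rfl⟩, hy⟩ := exists_lt_of_csInf_lt hne (lt_add_of_pos_right I hεpos)
  refine ⟨x, fun k hk1 hk2 => ?_⟩
  rcases hC x k with h|h
  swap
  · exact h
  · exfalso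
    have hDk : I ≤ Df A α (x+k) := csInf_le hbdd ⟨x+k, rfl⟩
    have hdiff := Df_diff hC x k
    rw [h] at hdiff
    have hle : ε ≤ (k:ℝ) * α - (⌊(k:ℝ) * α⌋ : ℝ) := by
      rw [hε]
      exact Finset.inf'_le (fun k : ℕ => (k:ℝ) * α - ((⌊(k:ℝ) * α⌋ : ℝ)))
        (Finset.mem_Icc.mpr ⟨hk1, hk2⟩)
    push_cast at hdiff
    linarith

end D
end Alpha

section Final
variable {A : ℕ → ℤ} {α : ℝ}

noncomputable def mfl (α : ℝ) (k : ℕ) : ℤ := ⌊(k:ℝ) * α⌋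

lemma charSturmian_eq (α : ℝ) (t : ℕ) :
    charSturmian α t = mfl α (t+2) - mfl α (t+1) := by
  rw [charSturmian, mfl, mfl]
  have e1 : (((t+2:ℕ)):ℝ) = (t:ℝ) + 2 := by push_cast; ring
  have e2 : (((t+1:ℕ)):ℝ) = (t:ℝ) + 1 := by push_cast; ring
  rw [e1, e2]

lemma mfl_zero (α : ℝ) : mfl α 0 = 0 := by simp [mfl]

lemma mfl_one (h0 : 0 < α) (h1 : α < 1) : mfl α 1 = 0 := by
  rw [mfl]
  simp only [Nat.cast_one, one_mul]
  exact Int.floor_eq_zero_iff.mpr ⟨le_of_lt h0, h1⟩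

lemma mfl_step (h0 : 0 < α) (h1 : α < 1) (t : ℕ) :
    mfl α (t+1) = mfl α t ∨ mfl α (t+1) = mfl α t + 1 := by
  have hle : mfl α t ≤ mfl α (t+1) := by
    apply Int.floor_le_floor
    push_cast
    nlinarith
  have hlt : mfl α (t+1) ≤ mfl α t + 1 := by
    rw [mfl, mfl]
    have : ((t:ℝ)+1) * α ≤ (t:ℝ) * α + 1 := by nlinarith
    calc ⌊((t+1:ℕ):ℝ) * α⌋ ≤ ⌊(t:ℝ) * α + 1⌋ := by
          apply Int.floor_le_floor
          push_cast
          linarith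
      _ = ⌊(t:ℝ) * α⌋ + 1 := by
          rw [show ((1:ℝ)) = ((1:ℤ):ℝ) by norm_num, Int.floor_add_intCast]
  omega

/-- the lower mechanical word -/
lemma low_eq (h0 : 0 < α) (h1 : α < 1) (t : ℕ) :
    consSeq 0 (charSturmian α) t = mfl α (t+1) - mfl α t := by
  cases t with
  | zero =>
    show (0:ℤ) = mfl α 1 - mfl α 0
    rw [mfl_one h0 h1, mfl_zero]
    ring
  | succ t =>
    show charSturmian α t = mfl α (t+2) - mfl α (t+1)
    exact charSturmian_eq α t

lemma low_binary (h0 : 0 < α) (h1 : α < 1) (t : ℕ) :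
    consSeq 0 (charSturmian α) t = 0 ∨ consSeq 0 (charSturmian α) t = 1 := by
  rw [low_eq h0 h1]
  rcases mfl_step h0 h1 t with h|h <;> omega

lemma high_zero : consSeq 1 (charSturmian α) 0 = 1 := rfl

lemma high_succ (t : ℕ) : consSeq 1 (charSturmian α) (t+1) = mfl α (t+2) - mfl α (t+1) :=
  charSturmian_eq α t

lemma high_binary (h0 : 0 < α) (h1 : α < 1) (t : ℕ) :
    consSeq 1 (charSturmian α) t = 0 ∨ consSeq 1 (charSturmian α) t = 1 := by
  cases t with
  | zero => right; rfl
  | succ t =>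
    rw [high_succ]
    have h := mfl_step h0 h1 (t+1)
    have e : t + 1 + 1 = t + 2 := rfl
    rw [e] at h
    rcases h with h|h <;> omega

lemma sum_low (h0 : 0 < α) (h1 : α < 1) (k : ℕ) :
    ∑ t ∈ Finset.range k, consSeq 0 (charSturmian α) t = mfl α k := by
  induction k with
  | zero => simp [mfl_zero]
  | succ k ih =>
    rw [Finset.sum_range_succ, ih, low_eq h0 h1]
    ring

lemma sum_high (h0 : 0 < α) (h1 : α < 1) (k : ℕ) (hk : 1 ≤ k) :
    ∑ t ∈ Finset.range k, consSeq 1 (charSturmian α) t = mfl α k + 1 := by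
  induction k with
  | zero => omega
  | succ k ih =>
    rcases Nat.eq_zero_or_pos k with rfl|hkpos
    · rw [Finset.sum_range_succ]
      simp [high_zero, mfl_one h0 h1]
    · obtain ⟨k', rfl⟩ : ∃ k', k = k' + 1 := ⟨k - 1, by omega⟩
      rw [Finset.sum_range_succ, ih hkpos, high_succ k']
      have e : k' + 1 + 1 = k' + 2 := rfl
      rw [e]
      ring

theorem mainX (A : ℕ → ℤ) (α : ℝ)
    (hbin : ∀ n, A n = 0 ∨ A n = 1) (hcard : ∀ n, (factorsOfLength A n).ncard = n + 1)
    (hirr : Irrational α) (h0 : 0 < α) (h1 : α < 1)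
    (hslope : HasSlope A α) :
    (InOrbitClosure A (consSeq 0 (charSturmian α)) ∧
      ∀ c : ℕ → ℤ, InOrbitClosure A c →
        SeqLexLe (consSeq 0 (charSturmian α)) c) ∧
    (InOrbitClosure A (consSeq 1 (charSturmian α)) ∧
      ∀ c : ℕ → ℤ, InOrbitClosure A c →
        SeqLexLe c (consSeq 1 (charSturmian α))) := by
  classical
  have hbal := balanced hbin hcard
  have hC := countC hbin hirr hslope hbal
  have hcsum : ∀ c : ℕ → ℤ, InOrbitClosure A c → ∀ k,
      (∑ t ∈ Finset.range k, c t) = mfl α k ∨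
      (∑ t ∈ Finset.range k, c t) = mfl α k + 1 := by
    intro c hc k
    obtain ⟨i, hi⟩ := hc k
    have he : ∑ t ∈ Finset.range k, c t = cnt A i k :=
      Finset.sum_congr rfl (fun t ht => hi t (Finset.mem_range.mp ht))
    rw [he]
    exact hC i k
  have hcbin : ∀ c : ℕ → ℤ, InOrbitClosure A c → ∀ t, c t = 0 ∨ c t = 1 := by
    intro c hc t
    obtain ⟨i, hi⟩ := hc (t+1)
    rw [hi t (by omega)]
    exact hbin (i+t)
  constructor
  · constructor
    · -- membership of the lower mechanical word
      intro n
      rcases Nat.eq_zero_or_pos n with rfl|hn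
      · exact ⟨0, by omega⟩
      · obtain ⟨x, hx⟩ := extremal_low hC n hn
        refine ⟨x, fun t ht => ?_⟩
        rw [low_eq h0 h1]
        have hs1 : cnt A x (t+1) = mfl α (t+1) := hx (t+1) (by omega) (by omega)
        have hs0 : cnt A x t = mfl α t := by
          rcases Nat.eq_zero_or_pos t with rfl|htpos
          · rw [cnt_zero, mfl_zero]
          · exact hx t htpos (by omega)
        have hstep := cnt_succ A x t
        rw [hs1, hs0] at hstep
        omega
    · -- lexicographic minimality
      intro c hc
      by_cases heq : consSeq 0 (charSturmian α) = c
      · exact Or.inl heq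
      · right
        have hne := Function.ne_iff.mp heq
        refine ⟨Nat.find hne, fun m hm => not_not.mp (Nat.find_min hne hm), ?_⟩
        set n₀ := Nat.find hne with hn₀
        have hdiff : consSeq 0 (charSturmian α) n₀ ≠ c n₀ := Nat.find_spec hne
        have hagree : ∀ m, m < n₀ → consSeq 0 (charSturmian α) m = c m :=
          fun m hm => not_not.mp (Nat.find_min hne hm)
        by_contra hnlt
        push_neg at hnlt
        have hclt : c n₀ < consSeq 0 (charSturmian α) n₀ :=
          lt_of_le_of_ne hnlt (fun h => hdiff h.symm)
        have hlb := low_binary h0 h1 (α := α) n₀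
        have hcb := hcbin c hc n₀
        have hv1 : consSeq 0 (charSturmian α) n₀ = 1 := by omega
        have hv0 : c n₀ = 0 := by omega
        have hsum : ∑ t ∈ Finset.range (n₀+1), c t = mfl α n₀ := by
          rw [Finset.sum_range_succ, hv0]
          have : ∑ t ∈ Finset.range n₀, c t =
              ∑ t ∈ Finset.range n₀, consSeq 0 (charSturmian α) t :=
            Finset.sum_congr rfl (fun t ht => (hagree t (Finset.mem_range.mp ht)).symm)
          rw [this, sum_low h0 h1]
          ring
        have hstep : mfl α (n₀+1) - mfl α n₀ = 1 := by
          have := low_eq h0 h1 (α := α) n₀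
          rw [hv1] at this
          omega
        rcases hcsum c hc (n₀+1) with h|h <;> rw [hsum] at h <;> omega
  · constructor
    · -- membership of the upper mechanical word
      intro n
      rcases Nat.eq_zero_or_pos n with rfl|hn
      · exact ⟨0, by omega⟩
      · obtain ⟨x, hx⟩ := extremal_high hirr hC n hn
        refine ⟨x, fun t ht => ?_⟩
        cases t with
        | zero =>
          have hs1 : cnt A x 1 = mfl α 1 + 1 := hx 1 (by omega) (by omega)
          rw [mfl_one h0 h1] at hs1
          have hstep : cnt A x 1 = cnt A x 0 + A (x + 0) := cnt_succ A x 0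
          rw [cnt_zero] at hstep
          show (1:ℤ) = A (x + 0)
          omega
        | succ t =>
          rw [high_succ]
          have hs1 : cnt A x (t+2) = mfl α (t+2) + 1 := hx (t+2) (by omega) (by omega)
          have hs0 : cnt A x (t+1) = mfl α (t+1) + 1 := hx (t+1) (by omega) (by omega)
          have hstep := cnt_succ A x (t+1)
          rw [hs1, hs0] at hstep
          omega
    · -- lexicographic maximality
      intro c hc
      by_cases heq : c = consSeq 1 (charSturmian α)
      · exact Or.inl heq
      · right
        have hne := Function.ne_iff.mp heq
        refine ⟨Nat.find hne, fun m hm => not_not.mp (Nat.find_min hne hm), ?_⟩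
        set n₀ := Nat.find hne with hn₀
        have hdiff : c n₀ ≠ consSeq 1 (charSturmian α) n₀ := Nat.find_spec hne
        have hagree : ∀ m, m < n₀ → c m = consSeq 1 (charSturmian α) m :=
          fun m hm => not_not.mp (Nat.find_min hne hm)
        by_contra hnlt
        push_neg at hnlt
        have hclt : consSeq 1 (charSturmian α) n₀ < c n₀ :=
          lt_of_le_of_ne hnlt (fun h => hdiff h.symm)
        have hlb := high_binary h0 h1 (α := α) n₀
        have hcb := hcbin c hc n₀
        have hv1 : c n₀ = 1 := by omega
        have hv0 : consSeq 1 (charSturmian α) n₀ = 0 := by omega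
        have hn₀pos : 1 ≤ n₀ := by
          rcases Nat.eq_zero_or_pos n₀ with h|h
          · exfalso
            rw [h] at hv0
            rw [high_zero] at hv0
            norm_num at hv0
          · exact h
        have hsum : ∑ t ∈ Finset.range (n₀+1), c t = mfl α n₀ + 2 := by
          rw [Finset.sum_range_succ, hv1]
          have : ∑ t ∈ Finset.range n₀, c t =
              ∑ t ∈ Finset.range n₀, consSeq 1 (charSturmian α) t :=
            Finset.sum_congr rfl (fun t ht => hagree t (Finset.mem_range.mp ht))
          rw [this, sum_high h0 h1 n₀ hn₀pos]
          ring
        have hstep : mfl α (n₀+1) - mfl α n₀ = 0 := by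
          obtain ⟨t', ht'⟩ : ∃ t', n₀ = t' + 1 := ⟨n₀ - 1, by omega⟩
          have hhs := high_succ (α := α) t'
          rw [ht'] at hv0
          rw [hv0] at hhs
          rw [ht']
          have e : t' + 1 + 1 = t' + 2 := rfl
          rw [e]
          omega
        rcases hcsum c hc (n₀+1) with h|h <;> rw [hsum] at h <;> omega

end Final
end SOC


/-- If `A` is Sturmian with (irrational) slope `α` and `B` is the
characteristic Sturmian sequence of slope `α`, then the lexicographically
least sequence in the orbit closure of `A` is `0B` and the lexicographically
greatest one is `1B`. -/
theorem sturmian_orbitClosure_extremes (A : ℕ → ℤ) (α : ℝ)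
    (hA : IsSturmian A) (hirr : Irrational α) (h0 : 0 < α) (h1 : α < 1)
    (hslope : HasSlope A α) :
    (InOrbitClosure A (consSeq 0 (charSturmian α)) ∧
      ∀ c : ℕ → ℤ, InOrbitClosure A c →
        SeqLexLe (consSeq 0 (charSturmian α)) c) ∧
    (InOrbitClosure A (consSeq 1 (charSturmian α)) ∧
      ∀ c : ℕ → ℤ, InOrbitClosure A c →
        SeqLexLe c (consSeq 1 (charSturmian α))) :=
  SOC.mainX A α hA.1 hA.2 hirr h0 h1 hslope
end

section
/- Let k ≥ 2 and let B be a k-automatic sequence over the binary alphabet {0,1}. Define Θ(B) := sup({σ^k B : k ≥ 0} ∪ {σ^ℓ B̄ : ℓ ≥ 0}), the lexicographic supremum over all shifts of B and all shifts of its complement B̄. Then Θ(B) is k-automatic. -/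
namespace ThetaAux

/-- values of the components of a word of digit-tuples, LSD first -/
def vals (k : ℕ) {r : ℕ} (w : List (Fin r → Fin k)) (j : Fin r) : ℕ :=
  Nat.ofDigits k (w.map fun d => (d j).val)

/-- `P` is a k-automatic predicate on r-tuples: some DFA classifies every
representation (LSD first, arbitrary padding) correctly. -/
def AutoPred (k : ℕ) {r : ℕ} (P : (Fin r → ℕ) → Prop) : Prop :=
  ∃ (n : ℕ) (δ : Fin n → (Fin r → Fin k) → Fin n) (q0 : Fin n) (acc : Fin n → Bool),
    ∀ w : List (Fin r → Fin k), (acc (w.foldl δ q0) = true ↔ P (vals k w))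

theorem AutoPred.congr {k r : ℕ} {P Q : (Fin r → ℕ) → Prop} (h : AutoPred k P)
    (hPQ : ∀ x, P x ↔ Q x) : AutoPred k Q := by
  obtain ⟨n, δ, q0, acc, hM⟩ := h
  exact ⟨n, δ, q0, acc, fun w => (hM w).trans (hPQ _)⟩

theorem autoPred_of {k r : ℕ} {P : (Fin r → ℕ) → Prop} (Q : Type) [Fintype Q]
    (δ : Q → (Fin r → Fin k) → Q) (q0 : Q) (acc : Q → Bool)
    (h : ∀ w : List (Fin r → Fin k), acc (w.foldl δ q0) = true ↔ P (vals k w)) :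
    AutoPred k P := by
  let e := Fintype.equivFin Q
  refine ⟨Fintype.card Q, fun q d => e (δ (e.symm q) d), e q0, fun q => acc (e.symm q), ?_⟩
  intro w
  have key : ∀ (q : Q), w.foldl (fun q d => e (δ (e.symm q) d)) (e q) = e (w.foldl δ q) := by
    induction w with
    | nil => intro q; rfl
    | cons d w ih => intro q; simp [ih]
  rw [key q0]
  simpa using h w

theorem AutoPred.not {k r : ℕ} {P : (Fin r → ℕ) → Prop} (h : AutoPred k P) :
    AutoPred k (fun x => ¬ P x) := by
  obtain ⟨n, δ, q0, acc, hM⟩ := h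
  refine ⟨n, δ, q0, fun q => ! acc q, fun w => ?_⟩
  simp only [Bool.not_eq_true', Bool.eq_false_iff]
  exact not_congr (hM w)

theorem AutoPred.and {k r : ℕ} {P Q : (Fin r → ℕ) → Prop} (hP : AutoPred k P)
    (hQ : AutoPred k Q) : AutoPred k (fun x => P x ∧ Q x) := by
  obtain ⟨n1, δ1, q1, a1, h1⟩ := hP
  obtain ⟨n2, δ2, q2, a2, h2⟩ := hQ
  refine autoPred_of (Fin n1 × Fin n2) (fun q d => (δ1 q.1 d, δ2 q.2 d)) (q1, q2)
    (fun q => a1 q.1 && a2 q.2) (fun w => ?_)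
  have key : ∀ (p : Fin n1 × Fin n2),
      w.foldl (fun q d => (δ1 q.1 d, δ2 q.2 d)) p = (w.foldl δ1 p.1, w.foldl δ2 p.2) := by
    induction w with
    | nil => intro p; rfl
    | cons d w ih => intro p; simp [ih]
  rw [key]
  simp [h1 w, h2 w]

theorem AutoPred.or {k r : ℕ} {P Q : (Fin r → ℕ) → Prop} (hP : AutoPred k P)
    (hQ : AutoPred k Q) : AutoPred k (fun x => P x ∨ Q x) := by
  have := (hP.not.and hQ.not).not
  exact this.congr (by tauto)

theorem AutoPred.comp {k r r' : ℕ} {P : (Fin r → ℕ) → Prop} (h : AutoPred k P)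
    (ρ : Fin r → Fin r') : AutoPred k (fun x : Fin r' → ℕ => P (fun j => x (ρ j))) := by
  obtain ⟨n, δ, q0, acc, hM⟩ := h
  refine ⟨n, fun q d => δ q (fun j => d (ρ j)), q0, acc, fun w => ?_⟩
  have key : w.foldl (fun q d => δ q (fun j => d (ρ j))) q0
      = (w.map (fun d j => d (ρ j))).foldl δ q0 := by
    rw [List.foldl_map]
  rw [key, hM]
  have : vals k (w.map (fun d j => d (ρ j))) = fun j => vals k w (ρ j) := by
    funext j
    simp only [vals, List.map_map]
    rfl
  rw [this]

end ThetaAux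

namespace ThetaAux

/-- non-dependent snoc on digit tuples -/
def snocd {k r : ℕ} (d : Fin r → Fin k) (e : Fin k) : Fin (r + 1) → Fin k :=
  Fin.snoc d e

@[simp] lemma snocd_castSucc {k r : ℕ} (d : Fin r → Fin k) (e : Fin k) (j : Fin r) :
    snocd d e j.castSucc = d j := by simp [snocd]

@[simp] lemma snocd_last {k r : ℕ} (d : Fin r → Fin k) (e : Fin k) :
    snocd d e (Fin.last r) = e := by simp [snocd]

lemma ofDigits_zeros (k : ℕ) {α : Type*} (z : List α) :
    Nat.ofDigits k (z.map fun _ => (0 : ℕ)) = 0 := by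
  induction z with
  | nil => simp [Nat.ofDigits]
  | cons a z ih => rw [List.map_cons, Nat.ofDigits_cons, ih]; simp

lemma zip_snoc_castSucc {k r : ℕ} (j : Fin r) :
    ∀ (w : List (Fin r → Fin k)) (v : List (Fin k)), v.length = w.length →
    (List.zipWith snocd w v).map (fun d => (d j.castSucc).val)
      = w.map (fun d => (d j).val) := by
  intro w
  induction w with
  | nil => intro v hv; simp
  | cons d w ih =>
    intro v hv
    cases v with
    | nil => simp at hv
    | cons e v =>
      simp only [List.zipWith_cons_cons, List.map_cons, snocd_castSucc]
      rw [ih v (by simpa using hv)]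

lemma zip_snoc_last {k r : ℕ} :
    ∀ (w : List (Fin r → Fin k)) (v : List (Fin k)), v.length = w.length →
    (List.zipWith snocd w v).map (fun d => (d (Fin.last r)).val)
      = v.map Fin.val := by
  intro w
  induction w with
  | nil => intro v hv; simp at hv; simp [hv]
  | cons d w ih =>
    intro v hv
    cases v with
    | nil => simp at hv
    | cons e v =>
      simp only [List.zipWith_cons_cons, List.map_cons, snocd_last]
      rw [ih v (by simpa using hv)]

/-- the full-word value computation for projection -/
lemma vals_proj {k r : ℕ} (hk : 0 < k) (w : List (Fin r → Fin k)) (v z : List (Fin k))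
    (hv : v.length = w.length) :
    vals k (List.zipWith snocd w v
        ++ z.map (fun e => snocd (fun _ : Fin r => (⟨0, hk⟩ : Fin k)) e))
      = Fin.snoc (vals k w) (Nat.ofDigits k ((v ++ z).map Fin.val)) := by
  funext j
  refine Fin.lastCases ?_ ?_ j
  · show Nat.ofDigits k _ = _
    rw [Fin.snoc_last, List.map_append, List.map_map]
    rw [zip_snoc_last w v hv]
    have h2 : ((fun d : Fin (r+1) → Fin k => (d (Fin.last r)).val) ∘
        (fun e => snocd (fun _ : Fin r => (⟨0, hk⟩ : Fin k)) e)) = Fin.val := by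
      funext e; simp [Function.comp]
    rw [h2, ← List.map_append]
  · intro j
    show Nat.ofDigits k _ = _
    rw [Fin.snoc_castSucc, List.map_append, List.map_map]
    rw [zip_snoc_castSucc j w v hv]
    have h2 : ((fun d : Fin (r+1) → Fin k => (d j.castSucc).val) ∘
        (fun e => snocd (fun _ : Fin r => (⟨0, hk⟩ : Fin k)) e))
        = (fun _ => (0 : ℕ)) := by
      funext e; simp [Function.comp]
    rw [h2, Nat.ofDigits_append, ofDigits_zeros]
    simp [vals]

end ThetaAux

namespace ThetaAux

lemma ofDigits_replicate_zero (k m : ℕ) :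
    Nat.ofDigits k (List.replicate m (0 : ℕ)) = 0 := by
  induction m with
  | zero => simp [Nat.ofDigits]
  | succ m ih => rw [List.replicate_succ, Nat.ofDigits_cons, ih]; simp

theorem AutoPred.exists {k r : ℕ} (hk : 2 ≤ k) {P : (Fin (r + 1) → ℕ) → Prop}
    (h : AutoPred k P) :
    AutoPred k (fun x : Fin r → ℕ => ∃ y : ℕ, P (Fin.snoc x y)) := by
  classical
  obtain ⟨n, δ, q0, acc, hM⟩ := h
  have hk0 : 0 < k := by omega
  set z0 : Fin k := ⟨0, hk0⟩ with hz0
  set sn0 : Fin k → (Fin (r + 1) → Fin k) := fun e => snocd (fun _ : Fin r => z0) e with hsn0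
  set δ' : (Fin n → Bool) → (Fin r → Fin k) → (Fin n → Bool) := fun S d => fun q' =>
    decide (∃ q, S q = true ∧ ∃ e, δ q (snocd d e) = q') with hδ'
  set Reach : Fin n → Prop := fun q =>
    ∃ z : List (Fin k), acc ((z.map sn0).foldl δ q) = true with hReach
  set acc' : (Fin n → Bool) → Bool := fun S => decide (∃ q, S q = true ∧ Reach q) with hacc'
  set S0 : Fin n → Bool := fun q => decide (q = q0) with hS0
  refine autoPred_of (Fin n → Bool) δ' S0 acc' ?_
  have run_spec : ∀ (w : List (Fin r → Fin k)) (S : Fin n → Bool) (q' : Fin n),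
      ((w.foldl δ' S) q' = true) ↔
      ∃ v : List (Fin k), v.length = w.length ∧ ∃ q, S q = true ∧
        (List.zipWith snocd w v).foldl δ q = q' := by
    intro w
    induction w with
    | nil =>
      intro S q'
      constructor
      · intro hq; exact ⟨[], rfl, q', hq, rfl⟩
      · rintro ⟨v, hv, q, hq, hrun⟩
        have hv0 : v = [] := List.length_eq_zero_iff.mp hv
        subst hv0
        simp only [List.zipWith_nil_right, List.foldl_nil] at hrun
        rwa [hrun] at hq
    | cons d w ih =>
      intro S q'
      rw [List.foldl_cons, ih]
      constructor
      · rintro ⟨v', hv', q1, hq1, hrun⟩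
        have hq1' : ∃ q, S q = true ∧ ∃ e, δ q (snocd d e) = q1 := by
          have := hq1
          rw [hδ'] at this
          exact of_decide_eq_true this
        obtain ⟨q, hq, e, hde⟩ := hq1'
        refine ⟨e :: v', by simp [hv'], q, hq, ?_⟩
        simp only [List.zipWith_cons_cons, List.foldl_cons, hde, hrun]
      · rintro ⟨v, hv, q, hq, hrun⟩
        cases v with
        | nil => simp at hv
        | cons e v' =>
          refine ⟨v', by simpa using hv, δ q (snocd d e), ?_, ?_⟩
          · rw [hδ']
            exact decide_eq_true ⟨q, hq, e, rfl⟩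
          · simpa using hrun
  intro w
  constructor
  · intro hacc
    have : ∃ q', (w.foldl δ' S0) q' = true ∧ Reach q' := by
      have := hacc
      rw [hacc'] at this
      exact of_decide_eq_true this
    obtain ⟨q', hq', z, hz⟩ := this
    rw [run_spec] at hq'
    obtain ⟨v, hv, q, hq, hrun⟩ := hq'
    have hqq0 : q = q0 := by rw [hS0] at hq; exact of_decide_eq_true hq
    rw [hqq0] at hrun
    have hfull : acc (((List.zipWith snocd w v) ++ z.map sn0).foldl δ q0) = true := by
      rw [List.foldl_append, hrun]; exact hz
    rw [hM] at hfull
    rw [hsn0] at hfull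
    rw [vals_proj hk0 w v z hv] at hfull
    exact ⟨_, hfull⟩
  · rintro ⟨y, hy⟩
    -- build a representation of y of length ≥ |w|
    set u : List ℕ := Nat.digits k y with hu
    have hud : ∀ a ∈ u, a < k := fun a ha => Nat.digits_lt_base hk ha
    set ud : List (Fin k) := u.pmap (fun a ha => (⟨a, ha⟩ : Fin k)) hud with hudd
    set pad : List (Fin k) := ud ++ List.replicate (w.length - ud.length) z0 with hpad
    have hpadlen : w.length ≤ pad.length := by
      rw [hpad]; simp; omega
    set v : List (Fin k) := pad.take w.length with hv
    set z : List (Fin k) := pad.drop w.length with hz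
    have hvlen : v.length = w.length := by
      rw [hv, List.length_take]; omega
    have hvz : v ++ z = pad := List.take_append_drop _ _
    have hpadval : Nat.ofDigits k (pad.map Fin.val) = y := by
      rw [hpad, List.map_append, List.map_pmap]
      have h1 : (u.pmap (fun a (ha : a < k) => ((⟨a, ha⟩ : Fin k)).val) hud) = u := by
        rw [List.pmap_eq_map]
        simp
      rw [h1, List.map_replicate]
      show Nat.ofDigits k (u ++ List.replicate _ (0 : ℕ)) = y
      rw [Nat.ofDigits_append, ofDigits_replicate_zero, hu, Nat.ofDigits_digits]
      ring
    have hPW : P (vals k (List.zipWith snocd w v ++ z.map sn0)) := by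
      rw [hsn0, vals_proj hk0 w v z hvlen, hvz, hpadval]
      exact hy
    rw [← hM] at hPW
    rw [List.foldl_append] at hPW
    rw [hacc']
    apply decide_eq_true
    refine ⟨(List.zipWith snocd w v).foldl δ q0, ?_, z, hPW⟩
    rw [run_spec]
    exact ⟨v, hvlen, q0, by rw [hS0]; simp, rfl⟩

theorem AutoPred.forall {k r : ℕ} (hk : 2 ≤ k) {P : (Fin (r + 1) → ℕ) → Prop}
    (h : AutoPred k P) :
    AutoPred k (fun x : Fin r → ℕ => ∀ y : ℕ, P (Fin.snoc x y)) := by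
  have := (AutoPred.exists hk h.not).not
  exact this.congr (by intro x; push_neg; rfl)

end ThetaAux

namespace ThetaAux

@[simp] lemma vals_cons {k r : ℕ} (d : Fin r → Fin k) (w : List (Fin r → Fin k)) (j : Fin r) :
    vals k (d :: w) j = (d j).val + k * vals k w j := by
  simp [vals, Nat.ofDigits_cons]

@[simp] lemma vals_nil {k r : ℕ} (j : Fin r) : vals k ([] : List (Fin r → Fin k)) j = 0 := by
  simp [vals, Nat.ofDigits]

/-- transition function of the base-k addition checker (x0 = x1 + x2) -/
def addδ (k : ℕ) : Option Bool → (Fin 3 → Fin k) → Option Bool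
  | none, _ => none
  | some c, d =>
    if ((d 1).val + (d 2).val + c.toNat) % k = (d 0).val
    then some (decide (((d 1).val + (d 2).val + c.toNat) / k = 1)) else none

lemma addδ_none (k : ℕ) : ∀ w : List (Fin 3 → Fin k), w.foldl (addδ k) none = none := by
  intro w; induction w with
  | nil => rfl
  | cons d w ih => simpa [addδ] using ih

lemma add_run {k : ℕ} (hk : 2 ≤ k) :
    ∀ (w : List (Fin 3 → Fin k)) (c : Bool),
    (∀ b : Bool, w.foldl (addδ k) (some c) = some b →
      vals k w 1 + vals k w 2 + c.toNat = vals k w 0 + k ^ w.length * b.toNat) ∧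
    (w.foldl (addδ k) (some c) = none →
      ∀ b : Bool, vals k w 1 + vals k w 2 + c.toNat ≠ vals k w 0 + k ^ w.length * b.toNat) := by
  intro w
  induction w with
  | nil =>
    intro c
    constructor
    · intro b hb
      simp only [List.foldl_nil, Option.some.injEq] at hb
      subst hb
      simp
    · intro h; simp at h
  | cons d w ih =>
    intro c
    have hk0 : 0 < k := by omega
    set s : ℕ := (d 1).val + (d 2).val + c.toNat with hs
    have hcb : c.toNat ≤ 1 := by cases c <;> simp
    have hslt : s < 2 * k := by
      have h1 := (d 1).isLt
      have h2 := (d 2).isLt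
      omega
    have hdiv : s / k ≤ 1 := by
      have := (Nat.div_lt_iff_lt_mul hk0).2 hslt
      omega
    by_cases hc : s % k = (d 0).val
    · -- no trap: carry c2
      set c2 : Bool := decide (s / k = 1) with hc2
      have hstep : (d :: w).foldl (addδ k) (some c) = w.foldl (addδ k) (some c2) := by
        simp only [List.foldl_cons]
        congr 1
        simp [addδ, ← hs, hc, hc2]
      have hc2n : c2.toNat = s / k := by
        rcases Nat.le_one_iff_eq_zero_or_eq_one.mp hdiv with h | h <;> simp [hc2, h]
      have hsval : s = (d 0).val + k * c2.toNat := by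
        rw [hc2n]
        have := Nat.div_add_mod s k
        omega
      constructor
      · intro b hb
        rw [hstep] at hb
        have IH := (ih c2).1 b hb
        calc ((d 1).val + k * vals k w 1) + ((d 2).val + k * vals k w 2) + c.toNat
            = s + k * (vals k w 1 + vals k w 2) := by rw [hs]; ring
          _ = ((d 0).val + k * c2.toNat) + k * (vals k w 1 + vals k w 2) := by rw [← hsval]
          _ = (d 0).val + k * (vals k w 1 + vals k w 2 + c2.toNat) := by ring
          _ = (d 0).val + k * (vals k w 0 + k ^ w.length * b.toNat) := by rw [IH]
          _ = ((d 0).val + k * vals k w 0) + k ^ (w.length + 1) * b.toNat := by ring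
        -- conclude
      · intro hnone b heq
        rw [hstep] at hnone
        apply (ih c2).2 hnone b
        have heq' : s + k * (vals k w 1 + vals k w 2)
            = (d 0).val + k * (vals k w 0 + k ^ w.length * b.toNat) := by
          calc s + k * (vals k w 1 + vals k w 2)
              = ((d 1).val + k * vals k w 1) + ((d 2).val + k * vals k w 2) + c.toNat := by
                rw [hs]; ring
            _ = vals k (d :: w) 1 + vals k (d :: w) 2 + c.toNat := by simp
            _ = vals k (d :: w) 0 + k ^ (d :: w).length * b.toNat := heq
            _ = (d 0).val + k * (vals k w 0 + k ^ w.length * b.toNat) := by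
                simp [List.length_cons]; ring
        rw [hsval] at heq'
        have h2 : (d 0).val + k * (c2.toNat + (vals k w 1 + vals k w 2))
            = (d 0).val + k * (vals k w 0 + k ^ w.length * b.toNat) := by
          calc (d 0).val + k * (c2.toNat + (vals k w 1 + vals k w 2))
              = ((d 0).val + k * c2.toNat) + k * (vals k w 1 + vals k w 2) := by ring
            _ = (d 0).val + k * (vals k w 0 + k ^ w.length * b.toNat) := heq'
        have h3 := Nat.add_left_cancel h2
        have h4 := Nat.eq_of_mul_eq_mul_left hk0 h3
        omega
    · -- trap
      have hstep : (d :: w).foldl (addδ k) (some c) = none := by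
        simp only [List.foldl_cons]
        have : addδ k (some c) d = none := by
          simp [addδ, ← hs, hc]
        rw [this, addδ_none]
      constructor
      · intro b hb; rw [hstep] at hb; exact absurd hb (by simp)
      · intro _ b heq
        have heq' : s + k * (vals k w 1 + vals k w 2)
            = (d 0).val + k * (vals k w 0 + k ^ w.length * b.toNat) := by
          calc s + k * (vals k w 1 + vals k w 2)
              = ((d 1).val + k * vals k w 1) + ((d 2).val + k * vals k w 2) + c.toNat := by
                rw [hs]; ring
            _ = vals k (d :: w) 1 + vals k (d :: w) 2 + c.toNat := by simp
            _ = vals k (d :: w) 0 + k ^ (d :: w).length * b.toNat := heq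
            _ = (d 0).val + k * (vals k w 0 + k ^ w.length * b.toNat) := by
                simp [List.length_cons]; ring
        apply hc
        have hmod : (s + k * (vals k w 1 + vals k w 2)) % k
            = ((d 0).val + k * (vals k w 0 + k ^ w.length * b.toNat)) % k := by rw [heq']
        rw [Nat.add_mul_mod_self_left, Nat.add_mul_mod_self_left] at hmod
        rw [hmod]
        exact Nat.mod_eq_of_lt (d 0).isLt

theorem autoPred_add {k : ℕ} (hk : 2 ≤ k) :
    AutoPred k (fun x : Fin 3 → ℕ => x 0 = x 1 + x 2) := by
  have hk0 : 0 < k := by omega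
  refine autoPred_of (Option Bool) (addδ k) (some false) (fun q => q == some false)
    (fun w => ?_)
  cases hfold : w.foldl (addδ k) (some false) with
  | none =>
    simp only [hfold, beq_iff_eq]
    constructor
    · intro h; exact absurd h (by simp)
    · intro h
      exfalso
      apply (add_run hk w false).2 hfold false
      simp only [Bool.toNat_false, Nat.mul_zero, Nat.add_zero]
      omega
  | some b =>
    have hinv := (add_run hk w false).1 b hfold
    simp only [Bool.toNat_false, Nat.add_zero] at hinv
    cases b with
    | false =>
      simp only [hfold, beq_iff_eq, Option.some.injEq]
      simp only [Bool.toNat_false, Nat.mul_zero, Nat.add_zero] at hinv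
      constructor
      · intro _; omega
      · intro _; trivial
    | true =>
      simp only [hfold, beq_iff_eq, Option.some.injEq]
      simp only [Bool.toNat_true, Nat.mul_one] at hinv
      constructor
      · intro h; exact absurd h (by simp)
      · intro h
        exfalso
        have hpow : 0 < k ^ w.length := Nat.pow_pos hk0
        omega

theorem autoPred_seq {k : ℕ} {B : ℕ → Bool} (hB : IsKAutomatic k B) :
    AutoPred k (fun x : Fin 1 → ℕ => B (x 0) = true) := by
  obtain ⟨n, δ, q0, τ, h⟩ := hB
  refine ⟨n, fun q d => δ q (d 0), q0, τ, fun w => ?_⟩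
  have heq : Nat.ofDigits k ((w.map (fun d => d 0)).map Fin.val) = vals k w 0 := by
    rw [List.map_map]; rfl
  have hfold : w.foldl (fun q d => δ q (d 0)) q0 = (w.map (fun d => d 0)).foldl δ q0 := by
    rw [List.foldl_map]
  rw [hfold, ← h (vals k w 0) (w.map (fun d => d 0)) heq]

end ThetaAux

namespace ThetaAux

theorem AutoPred.iff {k r : ℕ} {P Q : (Fin r → ℕ) → Prop} (hP : AutoPred k P)
    (hQ : AutoPred k Q) : AutoPred k (fun x => P x ↔ Q x) :=
  ((hP.and hQ).or (hP.not.and hQ.not)).congr (by intro x; tauto)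

theorem AutoPred.imp {k r : ℕ} {P Q : (Fin r → ℕ) → Prop} (hP : AutoPred k P)
    (hQ : AutoPred k Q) : AutoPred k (fun x => P x → Q x) :=
  (hP.not.or hQ).congr (by intro x; tauto)

theorem autoPred_le {k : ℕ} (hk : 2 ≤ k) : AutoPred k (fun x : Fin 2 → ℕ => x 0 ≤ x 1) := by
  have h1 := (autoPred_add hk).comp (![1, 0, 2] : Fin 3 → Fin 3)
  refine (AutoPred.exists hk h1).congr ?_
  intro x
  show (∃ y, x 1 = x 0 + y) ↔ x 0 ≤ x 1
  constructor
  · rintro ⟨y, hy⟩; omega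
  · intro h; exact ⟨x 1 - x 0, by omega⟩

theorem autoPred_lt {k : ℕ} (hk : 2 ≤ k) : AutoPred k (fun x : Fin 2 → ℕ => x 0 < x 1) := by
  have h0 : AutoPred k (fun x : Fin 1 → ℕ => x 0 = 0) := by
    refine ((autoPred_add hk).comp (fun _ => 0)).congr ?_
    intro x
    show x 0 = x 0 + x 0 ↔ x 0 = 0
    omega
  have h1 := (autoPred_add hk).comp (![1, 0, 2] : Fin 3 → Fin 3)
  have h2 := (h0.comp (fun _ : Fin 1 => (2 : Fin 3))).not
  refine (AutoPred.exists hk (h1.and h2)).congr ?_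
  intro x
  show (∃ y, x 1 = x 0 + y ∧ ¬ y = 0) ↔ x 0 < x 1
  constructor
  · rintro ⟨y, hy, hy0⟩; omega
  · intro h; exact ⟨x 1 - x 0, by omega, by omega⟩

theorem autoPred_B2 {k : ℕ} (hk : 2 ≤ k) {B : ℕ → Bool} (hB : IsKAutomatic k B) :
    AutoPred k (fun x : Fin 2 → ℕ => B (x 0 + x 1) = true) := by
  have h1 := (autoPred_add hk).comp (![2, 0, 1] : Fin 3 → Fin 3)
  have h2 := (autoPred_seq hB).comp (fun _ : Fin 1 => (2 : Fin 3))
  refine (AutoPred.exists hk (h1.and h2)).congr ?_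
  intro x
  show (∃ y, y = x 0 + x 1 ∧ B y = true) ↔ B (x 0 + x 1) = true
  constructor
  · rintro ⟨y, rfl, hy⟩; exact hy
  · intro h; exact ⟨_, rfl, h⟩

/-- the b-twisted shift of B: `Wf B i b = σ^i B` for `b = false`,
`σ^i B̄` for `b = true` -/
def Wf (B : ℕ → Bool) (i : ℕ) (b : Bool) (m : ℕ) : Bool := xor b (B (m + i))

theorem autoW {k : ℕ} (hk : 2 ≤ k) {B : ℕ → Bool} (hB : IsKAutomatic k B)
    {r : ℕ} (b : Bool) (pi ps : Fin r) :
    AutoPred k (fun x : Fin r → ℕ => Wf B (x pi) b (x ps) = true) := by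
  have h1 := (autoPred_B2 hk hB).comp (![ps, pi] : Fin 2 → Fin r)
  cases b with
  | false =>
    refine h1.congr ?_
    intro x
    show B (x ps + x pi) = true ↔ _
    simp [Wf]
  | true =>
    refine h1.not.congr ?_
    intro x
    show ¬ B (x ps + x pi) = true ↔ _
    simp [Wf]

/-- `σ^i (B^b)` restricted to positions `≤ n` is lexicographically smaller
than `σ^j (B^c)` restricted likewise -/
def LtPre (B : ℕ → Bool) (i : ℕ) (b : Bool) (j : ℕ) (c : Bool) (n : ℕ) : Prop :=
  ∃ t, t ≤ n ∧ ((∀ s, s < t → Wf B i b s = Wf B j c s) ∧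
    (¬ Wf B i b t = true ∧ Wf B j c t = true))

/-- first-order description of `Θ n = true`: some window of length `n+1`
in `B` or `B̄` is lexicographically maximal among all such windows and ends
with the letter 1. -/
def Phi (B : ℕ → Bool) (n : ℕ) : Prop :=
  ∃ i, ((∀ j, ¬ LtPre B i false j false n ∧ ¬ LtPre B i false j true n)
          ∧ Wf B i false n = true)
     ∨ ((∀ j, ¬ LtPre B i true j false n ∧ ¬ LtPre B i true j true n)
          ∧ Wf B i true n = true)

theorem autoPred_phi {k : ℕ} (hk : 2 ≤ k) {B : ℕ → Bool} (hB : IsKAutomatic k B) :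
    AutoPred k (fun x : Fin 1 → ℕ => Phi B (x 0)) := by
  have booleq : ∀ u v : Bool, ((u = true ↔ v = true)) ↔ u = v := by decide
  -- arity 5 : variables n i j t s
  have eq5 : ∀ b c : Bool, AutoPred k (fun x : Fin 5 → ℕ =>
      x 4 < x 3 → Wf B (x 1) b (x 4) = Wf B (x 2) c (x 4)) := by
    intro b c
    have h1 := (autoW hk hB b (1 : Fin 5) 4).iff (autoW hk hB c (2 : Fin 5) 4)
    have hlt := (autoPred_lt hk).comp (![4, 3] : Fin 2 → Fin 5)
    refine (hlt.imp h1).congr ?_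
    intro x
    exact imp_congr Iff.rfl (booleq _ _)
  -- arity 4 : variables n i j t
  have all4 : ∀ b c : Bool, AutoPred k (fun x : Fin 4 → ℕ =>
      ∀ s, s < x 3 → Wf B (x 1) b s = Wf B (x 2) c s) := by
    intro b c
    exact (AutoPred.forall hk (eq5 b c)).congr (fun x => Iff.rfl)
  have bad4 : ∀ b c : Bool, AutoPred k (fun x : Fin 4 → ℕ =>
      x 3 ≤ x 0 ∧ ((∀ s, s < x 3 → Wf B (x 1) b s = Wf B (x 2) c s) ∧
        (¬ Wf B (x 1) b (x 3) = true ∧ Wf B (x 2) c (x 3) = true))) := by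
    intro b c
    have htle := (autoPred_le hk).comp (![3, 0] : Fin 2 → Fin 4)
    exact htle.and ((all4 b c).and (((autoW hk hB b (1 : Fin 4) 3).not).and
      (autoW hk hB c (2 : Fin 4) 3)))
  -- arity 3 : variables n i j
  have ge3 : ∀ b c : Bool, AutoPred k (fun x : Fin 3 → ℕ =>
      ¬ LtPre B (x 1) b (x 2) c (x 0)) := by
    intro b c
    exact ((AutoPred.exists hk (bad4 b c)).not).congr (fun x => Iff.rfl)
  -- arity 2 : variables n i
  have dom2 : ∀ b : Bool, AutoPred k (fun x : Fin 2 → ℕ =>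
      ∀ j, ¬ LtPre B (x 1) b j false (x 0) ∧ ¬ LtPre B (x 1) b j true (x 0)) := by
    intro b
    exact (AutoPred.forall hk ((ge3 b false).and (ge3 b true))).congr (fun x => Iff.rfl)
  have good2 : ∀ b : Bool, AutoPred k (fun x : Fin 2 → ℕ =>
      (∀ j, ¬ LtPre B (x 1) b j false (x 0) ∧ ¬ LtPre B (x 1) b j true (x 0))
        ∧ Wf B (x 1) b (x 0) = true) := by
    intro b
    exact (dom2 b).and (autoW hk hB b (1 : Fin 2) 0)
  exact (AutoPred.exists hk ((good2 false).or (good2 true))).congr (fun x => Iff.rfl)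

end ThetaAux

namespace ThetaAux

lemma bool_lt {u v : Bool} (hu : u = false) (hv : v = true) : u < v := by
  subst hu; subst hv; decide

lemma bool_lt_iff {u v : Bool} (h : u < v) : u = false ∧ v = true := by
  revert h; cases u <;> cases v <;> decide

/-- prefix version of the lexicographic comparison -/
lemma lex_prefix {x y : ℕ → Bool} (h : SeqLexLe x y) (n : ℕ) :
    (∀ m, m ≤ n → x m = y m) ∨
    ∃ t, t ≤ n ∧ (∀ s, s < t → x s = y s) ∧ (x t = false ∧ y t = true) := by
  rcases h with rfl | ⟨m, hag, hlt⟩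
  · left; intro m _; rfl
  · rcases le_or_gt m n with hm | hm
    · right; exact ⟨m, hm, hag, bool_lt_iff hlt⟩
    · left; intro m' hm'; exact hag m' (by omega)

lemma lex_not_gt {x y : ℕ → Bool} (h : SeqLexLe x y) (t : ℕ)
    (hag : ∀ s, s < t → x s = y s) (hx : x t = true) (hy : y t = false) : False := by
  rcases h with rfl | ⟨m, hag', hlt'⟩
  · rw [hx] at hy; exact absurd hy (by decide)
  · rcases lt_trichotomy m t with hmt | rfl | hmt
    · rw [hag m hmt] at hlt'; exact lt_irrefl _ hlt'
    · rw [hx, hy] at hlt'; exact absurd hlt' (by decide)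
    · rw [hag' t hmt, hy] at hx; exact absurd hx (by decide)

end ThetaAux

namespace ThetaAux

section Math

variable {B Θ : ℕ → Bool}
variable (hub : ∀ (i : ℕ) (b : Bool), SeqLexLe (Wf B i b) Θ)
variable (hlub : ∀ C : ℕ → Bool, (∀ (i : ℕ) (b : Bool), SeqLexLe (Wf B i b) C) → SeqLexLe Θ C)

include hub hlub in
/-- every prefix of Θ occurs as a window of B or B̄ -/
lemma closure : ∀ n : ℕ, ∃ (i : ℕ) (b : Bool), ∀ m, m ≤ n → Wf B i b m = Θ m := by
  intro n
  induction n with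
  | zero =>
    refine ⟨0, !(B 0), fun m hm => ?_⟩
    have hm0 : m = 0 := Nat.le_zero.mp hm
    subst hm0
    have hW : Wf B 0 (!(B 0)) 0 = true := by cases hb : B 0 <;> simp [Wf, hb]
    rcases lex_prefix (hub 0 (!(B 0))) 0 with hall | ⟨t, ht, _, hxf, _⟩
    · rw [← hall 0 le_rfl, hW]
    · have ht0 : t = 0 := Nat.le_zero.mp ht
      subst ht0
      rw [hW] at hxf
      exact absurd hxf (by decide)
  | succ n ih =>
    by_cases hex : ∃ (i : ℕ) (b : Bool), ∀ m, m ≤ n + 1 → Wf B i b m = Θ m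
    · exact hex
    push_neg at hex
    obtain ⟨i, b, hib⟩ := ih
    have key : ∀ (i' : ℕ) (b' : Bool), (∀ m, m ≤ n → Wf B i' b' m = Θ m) →
        Wf B i' b' (n + 1) = false ∧ Θ (n + 1) = true := by
      intro i' b' hagr
      obtain ⟨m, hm, hnem⟩ := hex i' b'
      have hne : Wf B i' b' (n + 1) ≠ Θ (n + 1) := by
        rcases Nat.lt_or_ge m (n + 1) with h | h
        · exact absurd (hagr m (by omega)) hnem
        · have : m = n + 1 := by omega
          subst this; exact hnem
      rcases lex_prefix (hub i' b') (n + 1) with hall | ⟨t, ht, hagt, hxf, hyt⟩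
      · exact absurd (hall (n + 1) le_rfl) hne
      · have htn : t = n + 1 := by
          by_contra h
          have htn' : t ≤ n := by omega
          have := hagr t htn'
          rw [hxf] at this
          rw [← this] at hyt
          exact absurd hyt (by decide)
        subst htn
        exact ⟨hxf, hyt⟩
    obtain ⟨hWfb, hΘt⟩ := key i b hib
    set C : ℕ → Bool := fun m => if m ≤ n then Θ m else if m = n + 1 then false else true
      with hC
    have hClow : ∀ m, m ≤ n → C m = Θ m := by
      intro m hm; show (if m ≤ n then Θ m else _) = Θ m; rw [if_pos hm]
    have hCmid : C (n + 1) = false := by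
      show (if n + 1 ≤ n then Θ (n+1) else if n + 1 = n + 1 then false else true) = false
      rw [if_neg (by omega), if_pos rfl]
    have hChigh : ∀ m, n + 1 < m → C m = true := by
      intro m hm
      show (if m ≤ n then Θ m else if m = n + 1 then false else true) = true
      rw [if_neg (by omega), if_neg (by omega)]
    have hCub : ∀ (i' : ℕ) (b' : Bool), SeqLexLe (Wf B i' b') C := by
      intro i' b'
      by_cases hg : ∀ m, m ≤ n → Wf B i' b' m = Θ m
      · obtain ⟨hWf', _⟩ := key i' b' hg
        have hagC : ∀ m, m ≤ n + 1 → Wf B i' b' m = C m := by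
          intro m hm
          rcases Nat.lt_or_ge m (n + 1) with h | h
          · rw [hClow m (by omega)]; exact hg m (by omega)
          · have hm1 : m = n + 1 := by omega
            subst hm1
            rw [hCmid]
            exact hWf'
        by_cases heq : Wf B i' b' = C
        · exact Or.inl heq
        · right
          have hexd : ∃ p, Wf B i' b' p ≠ C p := by
            by_contra h
            push_neg at h
            exact heq (funext h)
          refine ⟨Nat.find hexd, fun s hs => not_ne_iff.mp (Nat.find_min hexd hs), ?_⟩
          have hp := Nat.find_spec hexd
          have hp1 : n + 1 < Nat.find hexd := by
            rcases Nat.lt_or_ge (n + 1) (Nat.find hexd) with h | h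
            · exact h
            · exact absurd (hagC _ h) hp
          have hCp : C (Nat.find hexd) = true := hChigh _ hp1
          refine bool_lt ?_ hCp
          rw [hCp] at hp
          simpa using hp
      · push_neg at hg
        rcases lex_prefix (hub i' b') n with hall | ⟨t, ht, hagt, hxf, hyt⟩
        · obtain ⟨m, hm, hne⟩ := hg
          exact absurd (hall m hm) hne
        · right
          refine ⟨t, fun s hs => ?_, ?_⟩
          · rw [hClow s (by omega)]; exact hagt s hs
          · have hCt : C t = true := by rw [hClow t ht]; exact hyt
            exact bool_lt hxf hCt
    have hΘC := hlub C hCub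
    exfalso
    refine lex_not_gt hΘC (n + 1) (fun s hs => ?_) hΘt hCmid
    rw [hClow s (by omega)]

include hub hlub in
theorem theta_eq_phi : ∀ n : ℕ, (Θ n = true ↔ Phi B n) := by
  intro n
  have hLt : ∀ (i : ℕ) (b : Bool) (j : ℕ) (c : Bool), LtPre B i b j c n ↔
      ∃ t, t ≤ n ∧ (∀ s, s < t → Wf B i b s = Wf B j c s) ∧
        (Wf B i b t = false ∧ Wf B j c t = true) := by
    intro i b j c
    unfold LtPre
    simp only [Bool.not_eq_true]
  constructor
  · intro hΘn
    obtain ⟨i, b, hib⟩ := closure hub hlub n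
    have hdom : ∀ (j : ℕ) (c : Bool), ¬ LtPre B i b j c n := by
      intro j c hcon
      rw [hLt] at hcon
      obtain ⟨t, ht, hagt, hxf, hyt⟩ := hcon
      rcases lex_prefix (hub j c) n with hall | ⟨t', ht', hagt', hxf', hyt'⟩
      · rw [hall t ht, ← hib t ht] at hyt
        rw [hyt] at hxf
        exact absurd hxf (by decide)
      · rcases lt_trichotomy t t' with h | rfl | h
        · have h1 : Wf B j c t = Θ t := hagt' t h
          rw [hib t ht] at hxf
          rw [← h1, hyt] at hxf
          exact absurd hxf (by decide)
        · rw [hyt] at hxf'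
          exact absurd hxf' (by decide)
        · have h1 : Wf B i b t' = Wf B j c t' := hagt t' h
          rw [← hib t' (by omega), h1] at hyt'
          rw [hyt'] at hxf'
          exact absurd hxf' (by decide)
    cases b with
    | false =>
      exact ⟨i, Or.inl ⟨fun j => ⟨hdom j false, hdom j true⟩, by rw [hib n le_rfl]; exact hΘn⟩⟩
    | true =>
      exact ⟨i, Or.inr ⟨fun j => ⟨hdom j false, hdom j true⟩, by rw [hib n le_rfl]; exact hΘn⟩⟩
  · intro hphi
    obtain ⟨i0, b0, hib0⟩ := closure hub hlub n
    -- extract the dominating window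
    have hmain : ∃ (i : ℕ) (b : Bool), (∀ (j : ℕ) (c : Bool), ¬ LtPre B i b j c n)
        ∧ Wf B i b n = true := by
      obtain ⟨i, h | h⟩ := hphi
      · exact ⟨i, false, fun j c => by cases c <;> [exact (h.1 j).1; exact (h.1 j).2], h.2⟩
      · exact ⟨i, true, fun j c => by cases c <;> [exact (h.1 j).1; exact (h.1 j).2], h.2⟩
    obtain ⟨i, b, hdom, hend⟩ := hmain
    rcases lex_prefix (hub i b) n with hall | ⟨t, ht, hagt, hxf, hyt⟩
    · rw [← hall n le_rfl]; exact hend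
    · exfalso
      apply hdom i0 b0
      rw [hLt]
      refine ⟨t, ht, fun s hs => ?_, hxf, ?_⟩
      · rw [hagt s hs, ← hib0 s (by omega)]
      · rw [hib0 t ht]; exact hyt

end Math

end ThetaAux


open ThetaAux in
/-- If `B` is a `k`-automatic binary sequence, then
`Θ(B) = sup({σ^i B : i ≥ 0} ∪ {σ^ℓ B̄ : ℓ ≥ 0})` (the least upper bound, in the
lexicographic order with `false < true`, of all shifts of `B` and of its
letterwise complement `B̄`) is `k`-automatic. -/
theorem theta_automatic (k : ℕ) (hk : 2 ≤ k) (B : ℕ → Bool)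
    (hB : IsKAutomatic k B) (Θ : ℕ → Bool)
    (hubB : ∀ i : ℕ, SeqLexLe (fun n => B (n + i)) Θ)
    (hubC : ∀ l : ℕ, SeqLexLe (fun n => !B (n + l)) Θ)
    (hlub : ∀ C : ℕ → Bool, (∀ i : ℕ, SeqLexLe (fun n => B (n + i)) C) →
      (∀ l : ℕ, SeqLexLe (fun n => !B (n + l)) C) → SeqLexLe Θ C) :
    IsKAutomatic k Θ := by
  have hWf : ∀ (i : ℕ) (b : Bool), Wf B i b = (if b then (fun n => !B (n + i))
      else (fun n => B (n + i))) := by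
    intro i b
    cases b <;> (funext m; simp [Wf])
  have hub : ∀ (i : ℕ) (b : Bool), SeqLexLe (Wf B i b) Θ := by
    intro i b
    cases b
    · rw [hWf]; exact hubB i
    · rw [hWf]; exact hubC i
  have hlub' : ∀ C : ℕ → Bool, (∀ (i : ℕ) (b : Bool), SeqLexLe (Wf B i b) C) →
      SeqLexLe Θ C := by
    intro C h
    refine hlub C (fun i => ?_) (fun l => ?_)
    · have := h i false; rwa [hWf] at this
    · have := h l true; rwa [hWf] at this
  have hiff := theta_eq_phi hub hlub'
  have hauto : AutoPred k (fun x : Fin 1 → ℕ => Θ (x 0) = true) :=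
    (autoPred_phi hk hB).congr (fun x => (hiff (x 0)).symm)
  obtain ⟨n, δ, q0, acc, hM⟩ := hauto
  refine ⟨n, fun q d => δ q (fun _ => d), q0, acc, ?_⟩
  intro m w hw
  have hM' := hM (w.map (fun d => (fun _ : Fin 1 => d)))
  have hfold : (w.map (fun d => (fun _ : Fin 1 => d))).foldl δ q0
      = w.foldl (fun q d => δ q (fun _ => d)) q0 := by
    rw [List.foldl_map]
  have hvals : vals k (w.map fun d => (fun _ : Fin 1 => d)) 0 = m := by
    rw [← hw]
    simp only [vals, List.map_map]
    rfl
  have hM2 : acc ((w.map (fun d => (fun _ : Fin 1 => d))).foldl δ q0) = true ↔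
      Θ (vals k (w.map fun d => (fun _ : Fin 1 => d)) 0) = true := hM'
  rw [hfold, hvals] at hM2
  by_cases hs : acc (w.foldl (fun q d => δ q (fun _ => d)) q0) = true
  · rw [hM2.mp hs, hs]
  · have h1 : acc (w.foldl (fun q d => δ q (fun _ => d)) q0) = false :=
      Bool.eq_false_iff.mpr hs
    have h2 : Θ m = false := Bool.eq_false_iff.mpr (fun h => hs (hM2.mpr h))
    rw [h1, h2]
end
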